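/- arXiv:2204.11622 — 5 statements merged into one kernel-verified Lean document; each statement's English description precedes it below -/
import Mathlib

section
/- Let P and Q be orthogonal projections (hermitian idempotent n×n complex matrices) with equal rank, and suppose there exists a scalar α ≥ 0 such that (α+1)P ≤ Q + αI in the Loewner order. Then P = Q. -/
open Matrix
open scoped ComplexOrder

private lemma matrix_ext_mulVec {n : ℕ} {A B : Matrix (Fin n) (Fin n) ℂ}
    (h : ∀ v, A *ᵥ v = B *ᵥ v) : A = B := by
  ext i j
  have := congrFun (h (Pi.single j 1)) i
  simpa [Matrix.mulVec_single_one] using this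

/-- If `P` and `Q` are orthogonal projections of equal rank and `(α+1)P ≤ Q + αI`
in the Loewner order for some `α ≥ 0`, then `P = Q`. -/
theorem stmt0 {n : ℕ} (P Q : Matrix (Fin n) (Fin n) ℂ)
    (hPherm : P.IsHermitian) (hPidem : P * P = P)
    (hQherm : Q.IsHermitian) (hQidem : Q * Q = Q)
    (hrank : P.rank = Q.rank)
    (α : ℝ) (hα : 0 ≤ α)
    (hle : ((Q + α • (1 : Matrix (Fin n) (Fin n) ℂ)) - (α + 1) • P).PosSemidef) :
    P = Q := by
  -- R = 1 - Q is a hermitian idempotent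
  set R : Matrix (Fin n) (Fin n) ℂ := 1 - Q with hR
  have hRherm : R.IsHermitian := (Matrix.isHermitian_one).sub hQherm
  have hRidem : R * R = R := by
    simp only [hR, mul_sub, sub_mul, one_mul, mul_one, hQidem]
    abel
  -- key: Q fixes every vector in the range of P
  have key : ∀ y, Q *ᵥ (P *ᵥ y) = P *ᵥ y := by
    intro y
    set v := P *ᵥ y with hv
    have hPv : P *ᵥ v = v := by
      rw [hv, Matrix.mulVec_mulVec, hPidem]
    -- positivity from hle
    have h1 : 0 ≤ star v ⬝ᵥ (((Q + α • (1 : Matrix (Fin n) (Fin n) ℂ)) - (α + 1) • P) *ᵥ v) :=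
      hle.dotProduct_mulVec_nonneg v
    have hc : star v ⬝ᵥ (((Q + α • (1 : Matrix (Fin n) (Fin n) ℂ)) - (α + 1) • P) *ᵥ v)
        = star v ⬝ᵥ (Q *ᵥ v) - star v ⬝ᵥ v := by
      rw [Matrix.sub_mulVec, Matrix.add_mulVec, Matrix.smul_mulVec,
        Matrix.smul_mulVec, Matrix.one_mulVec, hPv]
      rw [dotProduct_sub, dotProduct_add, dotProduct_smul, dotProduct_smul]
      push_cast [Complex.real_smul]
      ring
    have h2 : star v ⬝ᵥ v ≤ star v ⬝ᵥ (Q *ᵥ v) := by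
      rw [hc] at h1
      exact sub_nonneg.mp h1
    -- the reverse inequality: ⟨v, Rv⟩ ≥ 0 where R = 1 - Q
    have h3 : star v ⬝ᵥ (R *ᵥ v) = star (R *ᵥ v) ⬝ᵥ (R *ᵥ v) := by
      symm
      rw [Matrix.star_mulVec, ← Matrix.dotProduct_mulVec, Matrix.mulVec_mulVec,
        hRherm.eq, hRidem]
    have h4 : star v ⬝ᵥ (R *ᵥ v) = star v ⬝ᵥ v - star v ⬝ᵥ (Q *ᵥ v) := by
      rw [hR, Matrix.sub_mulVec, Matrix.one_mulVec, dotProduct_sub]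
    have h5 : (0:ℂ) ≤ star v ⬝ᵥ (R *ᵥ v) := by
      rw [h3]; exact dotProduct_star_self_nonneg _
    have h6 : star v ⬝ᵥ (R *ᵥ v) = 0 := le_antisymm (by rw [h4]; exact sub_nonpos.mpr h2) h5
    have h7 : R *ᵥ v = 0 := by
      rw [h3] at h6
      exact dotProduct_star_self_eq_zero.mp h6
    have : v - Q *ᵥ v = 0 := by
      simpa [hR, Matrix.sub_mulVec, Matrix.one_mulVec] using h7
    rw [hv] at this ⊢
    exact (sub_eq_zero.mp this).symm
  -- hence Q * P = P
  have hQP : Q * P = P := by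
    apply matrix_ext_mulVec
    intro v
    rw [← Matrix.mulVec_mulVec]
    exact key v
  -- range P ≤ range Q
  have hle' : LinearMap.range P.mulVecLin ≤ LinearMap.range Q.mulVecLin := by
    rintro x ⟨y, rfl⟩
    exact ⟨P *ᵥ y, key y⟩
  have hrange : LinearMap.range P.mulVecLin = LinearMap.range Q.mulVecLin := by
    apply Submodule.eq_of_le_of_finrank_le hle'
    exact le_of_eq hrank.symm
  -- P fixes range Q, so P * Q = Q
  have hPQ : P * Q = Q := by
    apply matrix_ext_mulVec
    intro v
    rw [← Matrix.mulVec_mulVec]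
    have : Q *ᵥ v ∈ LinearMap.range P.mulVecLin := by
      rw [hrange]; exact ⟨v, rfl⟩
    obtain ⟨y, hy⟩ := this
    rw [← hy, Matrix.mulVecLin_apply, Matrix.mulVec_mulVec, hPidem]
  -- P * Q = P by taking adjoints of Q * P = P
  have hPQ' : P * Q = P := by
    have := congrArg Matrix.conjTranspose hQP
    rwa [Matrix.conjTranspose_mul, hPherm.eq, hQherm.eq] at this
  rw [← hPQ, hPQ']
end

section
/- Let P, Q, R be rank-one orthogonal projections on ℂⁿ with PQ = QP = 0 and R ≤ P + Q. Then the maximum of the set {t ∈ [0,∞) : tR ≤ Q + 2P} equals 2/(2 − Tr(PR)). -/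
open Matrix
open scoped ComplexOrder

lemma exists_unit_vec {n : ℕ} {A : Matrix (Fin n) (Fin n) ℂ}
    (hherm : A.IsHermitian) (hidem : A * A = A) (hrank : A.rank = 1) :
    ∃ v : Fin n → ℂ, star v ⬝ᵥ v = 1 ∧ A = vecMulVec v (star v) := by
  have hA0 : A ≠ 0 := by
    intro h; rw [h, Matrix.rank_zero] at hrank; exact one_ne_zero hrank.symm
  obtain ⟨i0, j0, hij⟩ : ∃ i j, A i j ≠ 0 := by
    by_contra h; push_neg at h; exact hA0 (Matrix.ext fun i j => h i j)
  set u : Fin n → ℂ := fun i => A i j0 with hu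
  have hune : u ≠ 0 := fun h => hij (congrFun h i0)
  have hAu : A *ᵥ u = u := by
    have : A *ᵥ (A *ᵥ Pi.single j0 1) = A *ᵥ Pi.single j0 1 := by
      rw [Matrix.mulVec_mulVec, hidem]
    simpa [hu, Matrix.col_apply'] using this
  have humem : u ∈ LinearMap.range A.mulVecLin := ⟨u, hAu⟩
  have hspan : Submodule.span ℂ {u} = LinearMap.range A.mulVecLin := by
    apply Submodule.eq_of_le_of_finrank_le
    · rw [Submodule.span_le, Set.singleton_subset_iff]; exact humem
    · rw [show Module.finrank ℂ (LinearMap.range A.mulVecLin) = A.rank from rfl, hrank,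
        finrank_span_singleton hune]
  have hxmem : ∀ x : Fin n → ℂ, ∃ c : ℂ, A *ᵥ x = c • u := by
    intro x
    have : A *ᵥ x ∈ Submodule.span ℂ {u} := hspan ▸ ⟨x, rfl⟩
    exact (Submodule.mem_span_singleton.mp this).imp fun c hc => hc.symm
  have hN : star u ⬝ᵥ u ≠ 0 := fun h => hune (dotProduct_star_self_eq_zero.mp h)
  set N : ℂ := star u ⬝ᵥ u with hNdef
  have hkey : ∀ x : Fin n → ℂ, star u ⬝ᵥ (A *ᵥ x) = star u ⬝ᵥ x := by
    intro x
    rw [Matrix.dotProduct_mulVec]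
    congr 1
    have : star (A *ᵥ u) = star u ᵥ* Aᴴ := Matrix.star_mulVec A u
    rw [hAu, hherm.eq] at this
    exact this.symm
  have hAx : ∀ x : Fin n → ℂ, A *ᵥ x = (N⁻¹ * (star u ⬝ᵥ x)) • u := by
    intro x
    obtain ⟨c, hc⟩ := hxmem x
    have h2 : star u ⬝ᵥ x = c * N := by
      rw [← hkey x, hc, dotProduct_smul]; simp [hNdef, smul_eq_mul]
    rw [hc, h2]; congr 1; field_simp
  have hsum : N = ∑ i, ((Complex.normSq (u i) : ℝ) : ℂ) := by
    simp [hNdef, dotProduct, Complex.normSq_eq_conj_mul_self]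
  have hNre : N = ((N.re : ℝ) : ℂ) := by
    rw [hsum]; simp [Complex.re_sum]
  have hnn : 0 ≤ N.re := by
    have := congrArg Complex.re hsum
    simp only [Complex.re_sum, Complex.ofReal_re] at this
    rw [this]; exact Finset.sum_nonneg fun i _ => Complex.normSq_nonneg _
  have hNpos : 0 < N.re :=
    lt_of_le_of_ne hnn (Ne.symm fun h => hN (by rw [hNre, h]; simp))
  set r : ℝ := Real.sqrt N.re with hr
  have hrpos : 0 < r := Real.sqrt_pos.mpr hNpos
  have hr2 : (r:ℝ)^2 = N.re := Real.sq_sqrt hNpos.le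
  have hrne : (r:ℂ) ≠ 0 := by exact_mod_cast hrpos.ne'
  have hNinv : N⁻¹ = ((r⁻¹:ℝ):ℂ)^2 := by
    rw [hNre]; push_cast; rw [← hr2]; field_simp; norm_cast
  refine ⟨fun i => (r⁻¹ : ℝ) • u i, ?_, ?_⟩
  · have h1 : (star (fun i => (r⁻¹ : ℝ) • u i) ⬝ᵥ fun i => (r⁻¹ : ℝ) • u i)
        = ((r⁻¹:ℝ):ℂ)^2 * N := by
      simp only [dotProduct, Pi.star_apply, hNdef, Finset.mul_sum,
        Complex.real_smul, star_mul', Complex.conj_ofReal]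
      congr 1; ext i
      simp only [Complex.star_def, map_inv₀, Complex.conj_ofReal, _root_.map_mul, Pi.star_apply]
      ring
    rw [h1, ← hNinv]
    field_simp
  · ext i j
    have h1 := congrFun (hAx (Pi.single j 1)) i
    simp only [Matrix.mulVec_single, mul_one, Pi.smul_apply, smul_eq_mul,
      dotProduct_single, MulOpposite.op_one, one_smul, Matrix.col_apply] at h1
    simp only [Matrix.vecMulVec_apply, Pi.star_apply, Complex.real_smul, star_mul',
      Complex.conj_ofReal]
    rw [h1, hNinv]
    simp only [Complex.star_def, map_inv₀, Complex.conj_ofReal, _root_.map_mul, Pi.star_apply]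
    ring

lemma trace_vmv {n : ℕ} (a b c d : Fin n → ℂ) :
    Matrix.trace (vecMulVec a (star b) * vecMulVec c (star d))
      = (star b ⬝ᵥ c) * (star d ⬝ᵥ a) := by
  simp only [Matrix.trace, Matrix.diag_apply, Matrix.mul_apply, Matrix.vecMulVec_apply,
    Pi.star_apply, dotProduct, Finset.sum_mul_sum]
  rw [Finset.sum_comm]
  congr 1; ext i; congr 1; ext k; ring

lemma vmv_mulVec {n : ℕ} (v w x : Fin n → ℂ) :
    vecMulVec v (star w) *ᵥ x = (star w ⬝ᵥ x) • v := by
  ext i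
  simp only [Matrix.mulVec, Matrix.vecMulVec_apply, Pi.star_apply, dotProduct,
    Pi.smul_apply, smul_eq_mul, Finset.sum_mul, Finset.mul_sum]
  rw [Finset.sum_congr rfl]
  · exact fun k _ => by ring

lemma rsmul_eq {n : ℕ} (A : Matrix (Fin n) (Fin n) ℂ) (r : ℝ) : r • A = (r:ℂ) • A := by
  ext i j; simp [Complex.real_smul]

lemma herm_rsmul {n : ℕ} {A : Matrix (Fin n) (Fin n) ℂ} (h : A.IsHermitian) (r : ℝ) :
    (r • A).IsHermitian := by
  have : (r • A)ᴴ = r • Aᴴ := by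
    ext i j
    simp [Matrix.conjTranspose_apply, Matrix.smul_apply, star_smul]
  rw [Matrix.IsHermitian, this, h.eq]

/-- If `P`, `Q`, `R` are rank-one orthogonal projections with `P ⊥ Q` and
`R ≤ P + Q`, then `max {t ∈ [0,∞) : tR ≤ Q + 2P} = 2/(2 - Tr(PR))`. -/
theorem stmt2 {n : ℕ} (P Q R : Matrix (Fin n) (Fin n) ℂ)
    (hPherm : P.IsHermitian) (hPidem : P * P = P) (hPrank : P.rank = 1)
    (hQherm : Q.IsHermitian) (hQidem : Q * Q = Q) (hQrank : Q.rank = 1)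
    (hRherm : R.IsHermitian) (hRidem : R * R = R) (hRrank : R.rank = 1)
    (hPQ : P * Q = 0) (hQP : Q * P = 0)
    (hRle : ((P + Q) - R).PosSemidef) :
    IsGreatest {t : ℝ | 0 ≤ t ∧ ((Q + (2 : ℝ) • P) - t • R).PosSemidef}
      (2 / (2 - ((P * R).trace).re)) := by
  obtain ⟨p, hp1, hPeq⟩ := exists_unit_vec hPherm hPidem hPrank
  obtain ⟨q, hq1, hQeq⟩ := exists_unit_vec hQherm hQidem hQrank
  obtain ⟨v, hv1, hReq⟩ := exists_unit_vec hRherm hRidem hRrank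
  -- orthogonality of p and q
  have hpq : star p ⬝ᵥ q = 0 := by
    have h0 : Matrix.trace (P * Q) = 0 := by rw [hPQ, Matrix.trace_zero]
    rw [hPeq, hQeq, trace_vmv] at h0
    rw [Matrix.star_dotProduct q p] at h0
    rw [Complex.star_def, Complex.mul_conj] at h0
    exact_mod_cast Complex.normSq_eq_zero.mp (by exact_mod_cast h0)
  have hqp : star q ⬝ᵥ p = 0 := by
    rw [Matrix.star_dotProduct, hpq, star_zero]
  set α : ℂ := star p ⬝ᵥ v with hα
  set β : ℂ := star q ⬝ᵥ v with hβ
  have hvp : star v ⬝ᵥ p = star α := by rw [Matrix.star_dotProduct, hα]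
  have hvq : star v ⬝ᵥ q = star β := by rw [Matrix.star_dotProduct, hβ]
  set ca : ℝ := Complex.normSq α with hca
  set cb : ℝ := Complex.normSq β with hcb
  have hcaC : ((ca:ℝ):ℂ) = α * star α := by
    rw [Complex.star_def, Complex.mul_conj, hca]
  have hcbC : ((cb:ℝ):ℂ) = β * star β := by
    rw [Complex.star_def, Complex.mul_conj, hcb]
  have htr : (Matrix.trace (P * R)).re = ca := by
    rw [hPeq, hReq, trace_vmv, hvp, ← hα, ← hcaC]
    simp
  -- decomposition of v
  set x₀ : Fin n → ℂ := v - α • p - β • q with hx₀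
  have hdot : ∀ w : Fin n → ℂ, w ⬝ᵥ x₀ = w ⬝ᵥ v - α * (w ⬝ᵥ p) - β * (w ⬝ᵥ q) := by
    intro w
    simp [hx₀, dotProduct_sub, dotProduct_smul, smul_eq_mul]
  have hpx : star p ⬝ᵥ x₀ = 0 := by rw [hdot, hp1, hpq, ← hα]; ring
  have hqx : star q ⬝ᵥ x₀ = 0 := by rw [hdot, hq1, hqp, ← hβ]; ring
  have hvx0 : star v ⬝ᵥ x₀ = 1 - α * star α - β * star β := by
    rw [hdot, hv1, hvp, hvq]
  have hPx : P *ᵥ x₀ = 0 := by rw [hPeq, vmv_mulVec, hpx, zero_smul]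
  have hQx : Q *ᵥ x₀ = 0 := by rw [hQeq, vmv_mulVec, hqx, zero_smul]
  set z : ℂ := star v ⬝ᵥ x₀ with hz
  have hE : star x₀ ⬝ᵥ ((P + Q - R) *ᵥ x₀) = -(z * star z) := by
    rw [Matrix.sub_mulVec, Matrix.add_mulVec, hPx, hQx, hReq, vmv_mulVec, ← hz]
    rw [zero_add, dotProduct_sub, dotProduct_zero, dotProduct_smul,
      smul_eq_mul, Matrix.star_dotProduct x₀ v, ← hz]
    ring
  have hz0 : z = 0 := by
    have h1 : (0:ℂ) ≤ -(z * star z) := hE ▸ hRle.dotProduct_mulVec_nonneg x₀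
    rw [Complex.star_def, Complex.mul_conj] at h1
    have h2 : ((Complex.normSq z : ℝ):ℂ) ≤ ((0:ℝ):ℂ) := by
      simpa using neg_nonneg.mp h1
    have h3 : Complex.normSq z ≤ 0 := Complex.real_le_real.mp h2
    exact Complex.normSq_eq_zero.mp (le_antisymm h3 (Complex.normSq_nonneg z))
  have hnorm : α * star α + β * star β = 1 := by
    have h := hz0.symm.trans hvx0
    linear_combination h
  have hx0 : x₀ = 0 := by
    apply dotProduct_star_self_eq_zero.mp
    have hstar : star x₀ = star v - star α • star p - star β • star q := by
      simp [hx₀, star_sub, star_smul]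
    rw [hstar, sub_dotProduct, sub_dotProduct, smul_dotProduct,
      smul_dotProduct, hpx, hqx, ← hz, hz0]
    simp
  have hvpq : v = α • p + β • q := by
    have h := hx0
    rw [hx₀, sub_sub, sub_eq_zero] at h
    exact h
  -- real facts
  have hnormR : ca + cb = 1 := by
    have h : ((ca:ℝ):ℂ) + ((cb:ℝ):ℂ) = 1 := by rw [hcaC, hcbC]; exact hnorm
    exact_mod_cast h
  have hca0 : 0 ≤ ca := Complex.normSq_nonneg α
  have hcb0 : 0 ≤ cb := Complex.normSq_nonneg β
  have hpos : (0:ℝ) < 2 - ca := by linarith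
  -- star v dot in terms of star p, star q
  have hw : ∀ x : Fin n → ℂ,
      star v ⬝ᵥ x = star α * (star p ⬝ᵥ x) + star β * (star q ⬝ᵥ x) := by
    intro x
    have hsv : star v = star α • star p + star β • star q := by
      rw [hvpq]; simp [star_add, star_smul]
    rw [hsv, add_dotProduct, smul_dotProduct, smul_dotProduct,
      smul_eq_mul, smul_eq_mul]
  -- generic quadratic form computation
  have hquad : ∀ (t : ℝ) (x : Fin n → ℂ),
      star x ⬝ᵥ (((Q + (2:ℝ) • P) - t • R) *ᵥ x)
        = (star q ⬝ᵥ x) * star (star q ⬝ᵥ x) + 2 * ((star p ⬝ᵥ x) * star (star p ⬝ᵥ x))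
          - (t:ℂ) * ((star v ⬝ᵥ x) * star (star v ⬝ᵥ x)) := by
    intro t x
    rw [Matrix.sub_mulVec, Matrix.add_mulVec, rsmul_eq P, rsmul_eq R t,
      Matrix.smul_mulVec, Matrix.smul_mulVec, hPeq, hQeq, hReq,
      vmv_mulVec, vmv_mulVec, vmv_mulVec]
    simp only [dotProduct_sub, dotProduct_add, dotProduct_smul,
      smul_eq_mul]
    rw [Matrix.star_dotProduct x q, Matrix.star_dotProduct x p, Matrix.star_dotProduct x v]
    push_cast
    ring
  rw [htr]
  constructor
  · -- membership
    refine ⟨(div_pos (by norm_num) hpos).le, Matrix.PosSemidef.of_dotProduct_mulVec_nonneg ?_ ?_⟩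
    · exact (hQherm.add (herm_rsmul hPherm 2)).sub (herm_rsmul hRherm _)
    · intro x
      rw [hquad, hw x]
      set a : ℂ := star p ⬝ᵥ x with ha
      set b : ℂ := star q ⬝ᵥ x with hb
      set g : ℂ := α * b - 2 * (β * a) with hg
      have hsW : star (star α * a + star β * b) = α * star a + β * star b := by
        simp only [star_add, star_sub, star_mul', star_star, star_ofNat]
      have hsg : star g = star α * star b - 2 * (star β * star a) := by
        simp only [hg, star_add, star_sub, star_mul', star_star, star_ofNat]
      have key : ((2:ℂ) - (ca:ℝ)) * (b * star b + 2 * (a * star a))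
          - 2 * ((star α * a + star β * b) * star (star α * a + star β * b))
          = star g * g := by
        rw [hsW, hsg, hcaC, hg]
        linear_combination (-2 * (2 * (a * star a) + b * star b)) * hnorm
      have h2c : ((2:ℂ) - ((ca:ℝ):ℂ)) ≠ 0 := by
        have : (((2 - ca :ℝ)):ℂ) ≠ 0 := by exact_mod_cast hpos.ne'
        push_cast at this
        exact this
      have hexpr : b * star b + 2 * (a * star a)
          - (((2 / (2 - ca) : ℝ)):ℂ) * ((star α * a + star β * b) * star (star α * a + star β * b))
          = (((2 - ca)⁻¹ * Complex.normSq g : ℝ) : ℂ) := by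
        have hng : ((Complex.normSq g : ℝ):ℂ) = star g * g := by
          rw [Complex.star_def, Complex.normSq_eq_conj_mul_self]
        push_cast
        rw [hng, ← key]
        field_simp [h2c]
      rw [hexpr]
      exact Complex.zero_le_real.mpr
        (mul_nonneg (inv_nonneg.mpr hpos.le) (Complex.normSq_nonneg g))
  · -- upper bound
    rintro t ⟨ht0, hts⟩
    have h := hts.dotProduct_mulVec_nonneg ((α/2) • p + β • q)
    rw [hquad] at h
    have hax : star p ⬝ᵥ ((α/2) • p + β • q) = α/2 := by
      rw [dotProduct_add, dotProduct_smul, dotProduct_smul,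
        hp1, hpq]
      simp
    have hbx : star q ⬝ᵥ ((α/2) • p + β • q) = β := by
      rw [dotProduct_add, dotProduct_smul, dotProduct_smul,
        hq1, hqp]
      simp
    have hwx : star v ⬝ᵥ ((α/2) • p + β • q) = ((ca/2 + cb : ℝ):ℂ) := by
      rw [hw, hax, hbx]
      push_cast [hcaC, hcbC]
      ring
    rw [hax, hbx, hwx] at h
    set s : ℝ := ca/2 + cb with hs
    have hval : β * star β + 2 * (α/2 * star (α/2)) - (t:ℂ) * (((s:ℝ):ℂ) * star ((s:ℝ):ℂ))
        = ((cb + ca/2 - t * s^2 : ℝ):ℂ) := by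
      have h1 : star ((s:ℝ):ℂ) = ((s:ℝ):ℂ) := by
        rw [Complex.star_def, Complex.conj_ofReal]
      rw [h1]
      have h2 : α/2 * star (α/2) = ((ca:ℝ):ℂ)/4 := by
        rw [hcaC]
        simp [star_div₀]
        ring
      rw [h2, ← hcbC]
      push_cast
      ring
    rw [hval] at h
    clear_value s
    have hr : (0:ℝ) ≤ cb + ca/2 - t * s^2 := Complex.zero_le_real.mp h
    have hseq : cb + ca/2 = s := by rw [hs]; ring
    have hr' : (0:ℝ) ≤ s - t * s^2 := by linarith [hr, hseq]
    have hspos : (0:ℝ) < s := by rw [hs]; linarith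
    have hts1 : t * s ≤ 1 := by nlinarith [hr', hspos]
    have h2s : 2 - ca = 2 * s := by rw [hs]; linarith
    rw [le_div_iff₀ hpos, h2s]
    nlinarith [hts1]
end

section
/- Let φ be a map from positive semidefinite n×n complex matrices to itself that preserves order (A ≤ B implies φ(A) ≤ φ(B)) and preserves spectrum (the set of eigenvalues of φ(A) equals the set of eigenvalues of A for all A). Then for every A ≥ 0 and every ε > 0, one has ‖φ(A + εI) − φ(A)‖ ≤ nε, where ‖·‖ is the operator norm. -/
open Matrix
open scoped ComplexOrder
open scoped Matrix.Norms.L2Operator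

namespace Stmt4Aux

variable {n : ℕ}

/-- ℓ² operator norm bound for diagonal matrices. -/
lemma diag_norm_le (v : Fin n → ℂ) {c : ℝ} (hc : 0 ≤ c) (h : ∀ i, ‖v i‖ ≤ c) :
    ‖Matrix.diagonal v‖ ≤ c := by
  rw [Matrix.cstar_norm_def]
  apply ContinuousLinearMap.opNorm_le_bound _ hc
  intro x
  have key : ∀ i, (toEuclideanCLM (𝕜 := ℂ) (Matrix.diagonal v) x) i = v i * x i := by
    intro i
    have := Matrix.ofLp_toEuclideanCLM (𝕜 := ℂ) (Matrix.diagonal v) x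
    have h2 := congrFun (congrArg (fun f => (f : Fin n → ℂ)) this) i
    simpa [Matrix.toLin'_apply, Matrix.mulVec_diagonal] using h2
  have hx : ∀ (y : EuclideanSpace ℂ (Fin n)), ‖y‖ = Real.sqrt (∑ i, ‖y i‖^2) := fun y => by
    rw [EuclideanSpace.norm_eq]
  rw [hx, hx]
  rw [← Real.sqrt_sq hc, ← Real.sqrt_mul (by positivity)]
  apply Real.sqrt_le_sqrt
  rw [Finset.mul_sum]
  apply Finset.sum_le_sum
  intro i _
  rw [key i, norm_mul, mul_pow]
  exact mul_le_mul_of_nonneg_right (pow_le_pow_left₀ (norm_nonneg _) (h i) 2) (by positivity)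

lemma unit_norm_le (U : unitary (Matrix (Fin n) (Fin n) ℂ)) :
    ‖(U : Matrix (Fin n) (Fin n) ℂ)‖ ≤ 1 := by
  have h1 : (U : Matrix (Fin n) (Fin n) ℂ)ᴴ * U = 1 := by
    rw [← Matrix.star_eq_conjTranspose]
    exact Unitary.star_mul_self_of_mem U.2
  have h2 : ‖(U : Matrix (Fin n) (Fin n) ℂ)‖ * ‖(U : Matrix (Fin n) (Fin n) ℂ)‖ ≤ 1 := by
    rw [← Matrix.l2_opNorm_conjTranspose_mul_self, h1, ← Matrix.diagonal_one]
    exact diag_norm_le _ zero_le_one (fun i => by simp)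
  nlinarith [norm_nonneg (U : Matrix (Fin n) (Fin n) ℂ)]

/-- The ℂ-spectrum of a Hermitian matrix is the range of its (real) eigenvalues. -/
lemma spec_eq {A : Matrix (Fin n) (Fin n) ℂ} (hA : A.IsHermitian) :
    spectrum ℂ A = Set.range (fun i => (hA.eigenvalues i : ℂ)) := by
  conv_lhs => rw [hA.spectral_theorem, Unitary.conjStarAlgAut_apply, Unitary.spectrum_star_right_conjugate, spectrum_diagonal]
  ext z; simp [Function.comp]

/-- Trace of a Hermitian matrix is the sum of the eigenvalues. -/
lemma trace_eq {A : Matrix (Fin n) (Fin n) ℂ} (hA : A.IsHermitian) :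
    A.trace = (∑ i, hA.eigenvalues i : ℝ) := by
  conv_lhs => rw [hA.spectral_theorem, Unitary.conjStarAlgAut_apply]
  rw [Matrix.trace_mul_cycle]
  simp [Matrix.trace_diagonal, ← Matrix.mul_assoc]

/-- Norm of a PSD matrix is at most the sum of its eigenvalues. -/
lemma norm_le_sum {D : Matrix (Fin n) (Fin n) ℂ} (hD : D.PosSemidef) :
    ‖D‖ ≤ ∑ i, hD.1.eigenvalues i := by
  set U := hD.1.eigenvectorUnitary with hU
  have hsum : 0 ≤ ∑ i, hD.1.eigenvalues i :=
    Finset.sum_nonneg fun i _ => hD.eigenvalues_nonneg i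
  have hd : ‖Matrix.diagonal (RCLike.ofReal ∘ hD.1.eigenvalues : Fin n → ℂ)‖
      ≤ ∑ i, hD.1.eigenvalues i := by
    apply diag_norm_le _ hsum
    intro i
    simp only [Function.comp_apply, RCLike.norm_ofReal]
    rw [abs_of_nonneg (hD.eigenvalues_nonneg i)]
    exact Finset.single_le_sum (fun j _ => hD.eigenvalues_nonneg j) (Finset.mem_univ i)
  calc ‖D‖ = ‖(U : Matrix (Fin n) (Fin n) ℂ) *
        Matrix.diagonal (RCLike.ofReal ∘ hD.1.eigenvalues) * (star U : Matrix (Fin n) (Fin n) ℂ)‖ := by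
        conv_lhs => rw [hD.1.spectral_theorem, Unitary.conjStarAlgAut_apply]
    _ ≤ ‖(U : Matrix (Fin n) (Fin n) ℂ) * Matrix.diagonal (RCLike.ofReal ∘ hD.1.eigenvalues)‖ *
          ‖(star U : Matrix (Fin n) (Fin n) ℂ)‖ := Matrix.l2_opNorm_mul _ _
    _ ≤ (‖(U : Matrix (Fin n) (Fin n) ℂ)‖ * ‖Matrix.diagonal (RCLike.ofReal ∘ hD.1.eigenvalues : Fin n → ℂ)‖) *
          ‖(star U : Matrix (Fin n) (Fin n) ℂ)‖ := by
        apply mul_le_mul_of_nonneg_right (Matrix.l2_opNorm_mul _ _) (norm_nonneg _)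
    _ ≤ (1 * (∑ i, hD.1.eigenvalues i)) * 1 := by
        apply mul_le_mul
        · apply mul_le_mul (unit_norm_le U) hd (norm_nonneg _) zero_le_one
        · exact unit_norm_le (star U)
        · exact norm_nonneg _
        · positivity
    _ = ∑ i, hD.1.eigenvalues i := by ring

/-- Monotonicity of eigenvalue sums w.r.t. the Loewner order. -/
lemma sum_mono {X Y : Matrix (Fin n) (Fin n) ℂ} (hX : X.IsHermitian) (hY : Y.IsHermitian)
    (hd : (Y - X).PosSemidef) :
    ∑ i, hX.eigenvalues i ≤ ∑ i, hY.eigenvalues i := by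
  have h0 : (0:ℝ) ≤ ∑ i, hd.1.eigenvalues i :=
    Finset.sum_nonneg fun i _ => hd.eigenvalues_nonneg i
  have ht : (Y - X).trace = Y.trace - X.trace := Matrix.trace_sub _ _
  rw [trace_eq hd.1, trace_eq hY, trace_eq hX, ← Complex.ofReal_sub] at ht
  have := Complex.ofReal_injective ht
  linarith

lemma range_eigen {X : Matrix (Fin n) (Fin n) ℂ} (hX : X.IsHermitian) {w : Fin n → ℝ}
    (h : spectrum ℂ X = Set.range (fun i => (w i : ℂ))) :
    Set.range hX.eigenvalues = Set.range w := by
  rw [spec_eq hX] at h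
  have h1 : (fun i => (hX.eigenvalues i : ℂ)) = Complex.ofReal ∘ hX.eigenvalues := rfl
  have h2 : (fun i => (w i : ℂ)) = Complex.ofReal ∘ w := rfl
  rw [h1, h2, Set.range_comp, Set.range_comp] at h
  exact Set.image_injective.mpr Complex.ofReal_injective h

/-- If `e` and `c` have the same range and `c` is injective, their sums agree. -/
lemma sum_eq_of_range {e c : Fin n → ℝ} (hc : Function.Injective c)
    (hr : Set.range e = Set.range c) : ∑ i, e i = ∑ i, c i := by
  have hmem : ∀ i, ∃ j, c j = e i := fun i => by
    have : e i ∈ Set.range c := hr ▸ Set.mem_range_self i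
    exact this
  choose g hg using hmem
  have hsurj : Function.Surjective g := by
    intro j
    have : c j ∈ Set.range e := hr ▸ Set.mem_range_self j
    obtain ⟨i, hi⟩ := this
    exact ⟨i, hc (by rw [hg i, hi])⟩
  have hbij : Function.Bijective g := Finite.surjective_iff_bijective.mp hsurj
  exact Fintype.sum_bijective g hbij _ _ (fun i => (hg i).symm)

/-- If `e ≥ 0` has the same range as `b`, whose nonzero values are pairwise distinct,
then `∑ b ≤ ∑ e`. -/
lemma sum_ge_of_range {e b : Fin n → ℝ} (he : ∀ i, 0 ≤ e i)
    (hr : Set.range e = Set.range b)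
    (hb : ∀ i j, b i ≠ 0 → b i = b j → i = j) :
    ∑ i, b i ≤ ∑ i, e i := by
  have hmem : ∀ i, ∃ j, e j = b i := fun i => by
    have : b i ∈ Set.range e := hr ▸ Set.mem_range_self i
    exact this
  choose g hg using hmem
  classical
  have h1 : ∑ i, b i = ∑ i ∈ Finset.univ.filter (fun i => b i ≠ 0), b i :=
    (Finset.sum_filter_ne_zero _).symm
  rw [h1]
  have hinj : ∀ i ∈ Finset.univ.filter (fun i => b i ≠ 0),
      ∀ j ∈ Finset.univ.filter (fun i => b i ≠ 0), g i = g j → i = j := by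
    intro i hi j hj hij
    simp only [Finset.mem_filter] at hi
    exact hb i j hi.2 (by rw [← hg i, ← hg j, hij])
  calc ∑ i ∈ Finset.univ.filter (fun i => b i ≠ 0), b i
      = ∑ i ∈ Finset.univ.filter (fun i => b i ≠ 0), e (g i) := by
        apply Finset.sum_congr rfl; intro i _; rw [hg i]
    _ = ∑ j ∈ (Finset.univ.filter (fun i => b i ≠ 0)).image g, e j :=
        (Finset.sum_image hinj).symm
    _ ≤ ∑ j, e j :=
        Finset.sum_le_sum_of_subset_of_nonneg (Finset.subset_univ _) (fun j _ _ => he j)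

lemma conj_psd (U : unitary (Matrix (Fin n) (Fin n) ℂ)) {w : Fin n → ℝ} (hw : ∀ i, 0 ≤ w i) :
    ((U : Matrix (Fin n) (Fin n) ℂ) * diagonal (fun i => (w i : ℂ)) *
      star (U : Matrix (Fin n) (Fin n) ℂ)).PosSemidef := by
  rw [Matrix.star_eq_conjTranspose]
  exact (Matrix.posSemidef_diagonal_iff.mpr
    (fun i => Complex.zero_le_real.mpr (hw i))).mul_mul_conjTranspose_same _

lemma spec_conj (U : unitary (Matrix (Fin n) (Fin n) ℂ)) (v : Fin n → ℂ) :
    spectrum ℂ ((U : Matrix (Fin n) (Fin n) ℂ) * diagonal v *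
      star (U : Matrix (Fin n) (Fin n) ℂ)) = Set.range v := by
  rw [Unitary.spectrum_star_right_conjugate, spectrum_diagonal]

lemma conj_sub (U : unitary (Matrix (Fin n) (Fin n) ℂ)) (v w : Fin n → ℝ) :
    (U : Matrix (Fin n) (Fin n) ℂ) * diagonal (fun i => (v i : ℂ)) * star (U : Matrix (Fin n) (Fin n) ℂ)
    - (U : Matrix (Fin n) (Fin n) ℂ) * diagonal (fun i => (w i : ℂ)) * star (U : Matrix (Fin n) (Fin n) ℂ)
    = (U : Matrix (Fin n) (Fin n) ℂ) * diagonal (fun i => ((v i - w i : ℝ) : ℂ)) *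
      star (U : Matrix (Fin n) (Fin n) ℂ) := by
  rw [← Matrix.sub_mul, ← Matrix.mul_sub, Matrix.diagonal_sub]
  congr 1
  ext i
  push_cast
  ring

lemma strictMono_aux (f : Fin n → ℝ) (hf : Monotone f) {δ : ℝ} (hδ : 0 < δ) (r : ℝ) :
    StrictMono (fun a : Fin n => f a + (r + (a : ℕ)) * δ) := by
  intro a b hab
  have h1 : f a ≤ f b := hf hab.le
  have h2 : ((a : ℕ) : ℝ) < ((b : ℕ) : ℝ) := by exact_mod_cast hab
  dsimp only
  nlinarith [mul_lt_mul_of_pos_right h2 hδ]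

lemma upper (φ : Matrix (Fin n) (Fin n) ℂ → Matrix (Fin n) (Fin n) ℂ)
    (hpsd : ∀ A : Matrix (Fin n) (Fin n) ℂ, A.PosSemidef → (φ A).PosSemidef)
    (horder : ∀ A B : Matrix (Fin n) (Fin n) ℂ, A.PosSemidef → B.PosSemidef →
      (B - A).PosSemidef → (φ B - φ A).PosSemidef)
    (hspec : ∀ A : Matrix (Fin n) (Fin n) ℂ, A.PosSemidef →
      spectrum ℂ (φ A) = spectrum ℂ A)
    {M : Matrix (Fin n) (Fin n) ℂ} (hM : M.PosSemidef) {δ : ℝ} (hδ : 0 < δ) :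
    ∑ i, (hpsd M hM).1.eigenvalues i ≤ (∑ i, hM.1.eigenvalues i) + n * n * δ := by
  classical
  set e := hM.1.eigenvalues with he
  set ρ := Tuple.sort e with hρ
  set c : Fin n → ℝ := fun i => e i + (1 + ((ρ.symm i : Fin n) : ℕ)) * δ with hc
  set U : unitary (Matrix (Fin n) (Fin n) ℂ) := hM.1.eigenvectorUnitary with hUdef
  set C := (U : Matrix (Fin n) (Fin n) ℂ) * diagonal (fun i => (c i : ℂ)) *
    star (U : Matrix (Fin n) (Fin n) ℂ) with hCdef
  have hMst : M = (U : Matrix (Fin n) (Fin n) ℂ) * diagonal (fun i => (e i : ℂ)) *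
      star (U : Matrix (Fin n) (Fin n) ℂ) := by
    have hst := hM.1.spectral_theorem
    rw [Unitary.conjStarAlgAut_apply] at hst
    exact hst
  have hce : ∀ i, e i ≤ c i := fun i => by
    have h0 : (0:ℝ) ≤ (1 + ((ρ.symm i : Fin n) : ℕ)) * δ := by positivity
    simp only [hc]; linarith
  have hcn : ∀ i, 0 ≤ c i := fun i => le_trans (hM.eigenvalues_nonneg i) (hce i)
  have hcub : ∀ i, c i ≤ e i + n * δ := fun i => by
    have h1 : (1:ℝ) + ((ρ.symm i : Fin n) : ℕ) ≤ n := by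
      have h0 : ((ρ.symm i : Fin n) : ℕ) + 1 ≤ n := (ρ.symm i).is_lt
      have h0' : (((ρ.symm i : Fin n) : ℕ) : ℝ) + 1 ≤ (n:ℝ) := by exact_mod_cast h0
      linarith
    simp only [hc]
    nlinarith [hδ.le]
  have hcinj : Function.Injective c := by
    have hF := strictMono_aux (e ∘ ρ) (Tuple.monotone_sort e) hδ 1
    have hrw : c = (fun a : Fin n => (e ∘ ρ) a + (1 + (a : ℕ)) * δ) ∘ ρ.symm := by
      funext i
      simp only [hc, Function.comp_apply, Equiv.apply_symm_apply]
    rw [hrw]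
    exact hF.injective.comp ρ.symm.injective
  have hCpsd : C.PosSemidef := conj_psd U hcn
  have hCM : (C - M).PosSemidef := by
    have hrw : C - M = (U : Matrix (Fin n) (Fin n) ℂ) *
        diagonal (fun i => ((c i - e i : ℝ) : ℂ)) * star (U : Matrix (Fin n) (Fin n) ℂ) := by
      rw [hCdef]
      nth_rewrite 1 [hMst]
      exact conj_sub U c e
    rw [hrw]
    exact conj_psd U (fun i => by have := hce i; linarith)
  have hφC := hpsd C hCpsd
  have hφM := hpsd M hM
  have hmono : ∑ i, hφM.1.eigenvalues i ≤ ∑ i, hφC.1.eigenvalues i :=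
    sum_mono hφM.1 hφC.1 (horder M C hM hCpsd hCM)
  have hs : spectrum ℂ (φ C) = Set.range (fun i => (c i : ℂ)) := by
    rw [hspec C hCpsd, hCdef]
    exact spec_conj U _
  have hsum_eq : ∑ i, hφC.1.eigenvalues i = ∑ i, c i :=
    sum_eq_of_range hcinj (range_eigen hφC.1 hs)
  have hfinal : ∑ i, c i ≤ (∑ i, e i) + n * n * δ := by
    calc ∑ i, c i ≤ ∑ i, (e i + n * δ) := Finset.sum_le_sum (fun i _ => hcub i)
      _ = (∑ i, e i) + n * (n * δ) := by
          rw [Finset.sum_add_distrib, Finset.sum_const, Finset.card_univ]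
          simp [nsmul_eq_mul]
      _ = (∑ i, e i) + n * n * δ := by ring
  calc ∑ i, hφM.1.eigenvalues i ≤ ∑ i, hφC.1.eigenvalues i := hmono
    _ = ∑ i, c i := hsum_eq
    _ ≤ (∑ i, e i) + n * n * δ := hfinal

lemma lower (φ : Matrix (Fin n) (Fin n) ℂ → Matrix (Fin n) (Fin n) ℂ)
    (hpsd : ∀ A : Matrix (Fin n) (Fin n) ℂ, A.PosSemidef → (φ A).PosSemidef)
    (horder : ∀ A B : Matrix (Fin n) (Fin n) ℂ, A.PosSemidef → B.PosSemidef →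
      (B - A).PosSemidef → (φ B - φ A).PosSemidef)
    (hspec : ∀ A : Matrix (Fin n) (Fin n) ℂ, A.PosSemidef →
      spectrum ℂ (φ A) = spectrum ℂ A)
    {M : Matrix (Fin n) (Fin n) ℂ} (hM : M.PosSemidef) {δ : ℝ} (hδ : 0 < δ) :
    (∑ i, hM.1.eigenvalues i) - n * n * δ ≤ ∑ i, (hpsd M hM).1.eigenvalues i := by
  classical
  set e := hM.1.eigenvalues with he
  set ρ := Tuple.sort e with hρ
  set G : Fin n → ℝ := fun a => (e ∘ ρ) a + (-(n:ℝ) + (a : ℕ)) * δ with hG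
  have hGmono : StrictMono G := strictMono_aux (e ∘ ρ) (Tuple.monotone_sort e) hδ (-(n:ℝ))
  set b : Fin n → ℝ := fun i => max (G (ρ.symm i)) 0 with hb
  set U : unitary (Matrix (Fin n) (Fin n) ℂ) := hM.1.eigenvectorUnitary with hUdef
  set B := (U : Matrix (Fin n) (Fin n) ℂ) * diagonal (fun i => (b i : ℂ)) *
    star (U : Matrix (Fin n) (Fin n) ℂ) with hBdef
  have hMst : M = (U : Matrix (Fin n) (Fin n) ℂ) * diagonal (fun i => (e i : ℂ)) *
      star (U : Matrix (Fin n) (Fin n) ℂ) := by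
    have hst := hM.1.spectral_theorem
    rw [Unitary.conjStarAlgAut_apply] at hst
    exact hst
  have hGe : ∀ i, G (ρ.symm i) ≤ e i := fun i => by
    have h1 : (-(n:ℝ) + ((ρ.symm i : Fin n) : ℕ)) ≤ 0 := by
      have := (ρ.symm i).is_lt
      have h2 : (((ρ.symm i : Fin n) : ℕ) : ℝ) < n := by exact_mod_cast this
      linarith
    have h3 : (e ∘ ρ) (ρ.symm i) = e i := by
      simp [Function.comp_apply, Equiv.apply_symm_apply]
    simp only [hG]
    rw [h3]
    nlinarith [hδ.le]
  have hbn : ∀ i, 0 ≤ b i := fun i => le_max_right _ _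
  have hbe : ∀ i, b i ≤ e i := fun i => max_le (hGe i) (hM.eigenvalues_nonneg i)
  have hblb : ∀ i, e i - n * δ ≤ b i := fun i => by
    have h3 : (e ∘ ρ) (ρ.symm i) = e i := by
      simp [Function.comp_apply, Equiv.apply_symm_apply]
    have h4 : e i - n * δ ≤ G (ρ.symm i) := by
      simp only [hG]
      rw [h3]
      have h5 : (0:ℝ) ≤ (((ρ.symm i : Fin n) : ℕ) : ℝ) := by positivity
      nlinarith [hδ.le]
    exact le_trans h4 (le_max_left _ _)
  have hbdist : ∀ i j, b i ≠ 0 → b i = b j → i = j := by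
    intro i j hi hij
    have hipos : 0 < b i := lt_of_le_of_ne (hbn i) (Ne.symm hi)
    have hbi : b i = G (ρ.symm i) := by
      by_contra h
      have : b i = 0 := by
        rcases max_choice (G (ρ.symm i)) 0 with h1 | h1
        · exact absurd h1 h
        · exact h1
      exact hi this
    have hbj : b j = G (ρ.symm j) := by
      by_contra h
      have : b j = 0 := by
        rcases max_choice (G (ρ.symm j)) 0 with h1 | h1
        · exact absurd h1 h
        · exact h1
      rw [← hij] at this
      exact hi this
    have : G (ρ.symm i) = G (ρ.symm j) := by rw [← hbi, ← hbj, hij]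
    have := hGmono.injective this
    exact ρ.symm.injective this
  have hBpsd : B.PosSemidef := conj_psd U hbn
  have hMB : (M - B).PosSemidef := by
    have hrw : M - B = (U : Matrix (Fin n) (Fin n) ℂ) *
        diagonal (fun i => ((e i - b i : ℝ) : ℂ)) * star (U : Matrix (Fin n) (Fin n) ℂ) := by
      rw [hBdef]
      nth_rewrite 1 [hMst]
      exact conj_sub U e b
    rw [hrw]
    exact conj_psd U (fun i => by have := hbe i; linarith)
  have hφB := hpsd B hBpsd
  have hφM := hpsd M hM
  have hmono : ∑ i, hφB.1.eigenvalues i ≤ ∑ i, hφM.1.eigenvalues i :=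
    sum_mono hφB.1 hφM.1 (horder B M hBpsd hM hMB)
  have hs : spectrum ℂ (φ B) = Set.range (fun i => (b i : ℂ)) := by
    rw [hspec B hBpsd, hBdef]
    exact spec_conj U _
  have hsum_ge : ∑ i, b i ≤ ∑ i, hφB.1.eigenvalues i :=
    sum_ge_of_range (fun i => hφB.eigenvalues_nonneg i) (range_eigen hφB.1 hs) hbdist
  have hfinal : (∑ i, e i) - n * n * δ ≤ ∑ i, b i := by
    calc (∑ i, e i) - n * n * δ = ∑ i, (e i - n * δ) := by
          rw [Finset.sum_sub_distrib, Finset.sum_const, Finset.card_univ]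
          simp [nsmul_eq_mul]
          ring
      _ ≤ ∑ i, b i := Finset.sum_le_sum (fun i _ => hblb i)
  linarith

end Stmt4Aux

open Stmt4Aux in
/-- If `φ` maps positive semidefinite matrices to positive semidefinite matrices,
preserves the Loewner order and preserves the spectrum, then
`‖φ(A + εI) - φ(A)‖ ≤ nε` in the `ℓ²` operator norm. -/
theorem stmt4 {n : ℕ}
    (φ : Matrix (Fin n) (Fin n) ℂ → Matrix (Fin n) (Fin n) ℂ)
    (hpsd : ∀ A : Matrix (Fin n) (Fin n) ℂ, A.PosSemidef → (φ A).PosSemidef)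
    (horder : ∀ A B : Matrix (Fin n) (Fin n) ℂ, A.PosSemidef → B.PosSemidef →
      (B - A).PosSemidef → (φ B - φ A).PosSemidef)
    (hspec : ∀ A : Matrix (Fin n) (Fin n) ℂ, A.PosSemidef →
      spectrum ℂ (φ A) = spectrum ℂ A)
    (A : Matrix (Fin n) (Fin n) ℂ) (hA : A.PosSemidef)
    (ε : ℝ) (hε : 0 < ε) :
    ‖φ (A + ε • (1 : Matrix (Fin n) (Fin n) ℂ)) - φ A‖ ≤ n * ε := by
  set M := A + ε • (1 : Matrix (Fin n) (Fin n) ℂ) with hM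
  have hsm : ε • (1 : Matrix (Fin n) (Fin n) ℂ) = diagonal (fun _ => ((ε:ℝ) : ℂ)) := by
    ext i j
    by_cases h : i = j <;>
      simp [h, Matrix.one_apply, Matrix.diagonal, Complex.real_smul]
  have hsm_psd : (ε • (1 : Matrix (Fin n) (Fin n) ℂ)).PosSemidef := by
    rw [hsm]
    exact Matrix.posSemidef_diagonal_iff.mpr (fun i => Complex.zero_le_real.mpr hε.le)
  have hMpsd : M.PosSemidef := hA.add hsm_psd
  have hMA : (M - A).PosSemidef := by
    have : M - A = ε • (1 : Matrix (Fin n) (Fin n) ℂ) := by rw [hM]; abel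
    rw [this]; exact hsm_psd
  have hφM := hpsd M hMpsd
  have hφA := hpsd A hA
  have hD : (φ M - φ A).PosSemidef := horder A M hA hMpsd hMA
  -- trace of M vs A
  have htraceM : (∑ i, hMpsd.1.eigenvalues i) = (∑ i, hA.1.eigenvalues i) + n * ε := by
    have h1 : M.trace = A.trace + (n * ε : ℝ) := by
      rw [hM, Matrix.trace_add, hsm, Matrix.trace_diagonal]
      have hs2 : (∑ _i : Fin n, ((ε:ℝ) : ℂ)) = (n : ℂ) * (ε : ℝ) := by
        rw [Finset.sum_const, Finset.card_univ, Fintype.card_fin, nsmul_eq_mul]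
      rw [hs2]
      push_cast
      ring
    rw [trace_eq hMpsd.1, trace_eq hA.1] at h1
    have h2 : ((∑ i, hMpsd.1.eigenvalues i : ℝ) : ℂ)
        = (((∑ i, hA.1.eigenvalues i) + n * ε : ℝ) : ℂ) := by
      rw [h1]; push_cast; ring
    exact_mod_cast h2
  -- sum of eigenvalues of difference
  have hsplit : ∑ i, hD.1.eigenvalues i
      = (∑ i, hφM.1.eigenvalues i) - (∑ i, hφA.1.eigenvalues i) := by
    have h1 : (φ M - φ A).trace = (φ M).trace - (φ A).trace := Matrix.trace_sub _ _
    rw [trace_eq hD.1, trace_eq hφM.1, trace_eq hφA.1, ← Complex.ofReal_sub] at h1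
    exact_mod_cast h1
  have key : ∀ δ : ℝ, 0 < δ →
      ‖φ M - φ A‖ ≤ n * ε + 2 * (n * n * δ) := by
    intro δ hδ
    have hup := upper φ hpsd horder hspec hMpsd hδ
    have hlo := lower φ hpsd horder hspec hA hδ
    have hnorm := norm_le_sum hD
    rw [hsplit] at hnorm
    linarith
  -- conclude
  by_contra hcon
  push_neg at hcon
  set δ := (‖φ M - φ A‖ - n * ε) / (2 * ((n:ℝ) * n) + 1) with hδdef
  have hden : (0:ℝ) < 2 * ((n:ℝ) * n) + 1 := by positivity
  have hδpos : 0 < δ := div_pos (by linarith) hden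
  have hthis := key δ hδpos
  have hprod : δ * (2 * ((n:ℝ) * n) + 1) = ‖φ M - φ A‖ - n * ε := by
    rw [hδdef]
    field_simp
  nlinarith [hδpos, hprod, hthis, hcon]
end

section
/- Let φ be an injective map on positive semidefinite n×n complex matrices which preserves order and shrinks spectrum (σ(φ(A)) ⊆ σ(A) for all A), and suppose it is known that φ maps orthogonal projections of rank k to orthogonal projections of rank k for each k. Then for every orthogonal projection P and every scalar α ≥ 0, φ(αP) = αφ(P). -/
open Matrix
open scoped ComplexOrder

namespace Stmt8Aux

variable {n : ℕ}

local notation "Mn" => Matrix (Fin n) (Fin n) ℂ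

lemma real_smul_eq (α : ℝ) (A : Mn) : α • A = (α : ℂ) • A := by
  ext i j; simp [Matrix.smul_apply, Complex.real_smul]

lemma psd_smul {A : Mn} (hA : A.PosSemidef) {α : ℝ} (hα : 0 ≤ α) :
    ((α : ℂ) • A).PosSemidef := by
  rw [Matrix.posSemidef_iff_dotProduct_mulVec]
  constructor
  · unfold Matrix.IsHermitian
    rw [Matrix.conjTranspose_smul, hA.1]
    congr 1
    simp
  · intro x
    rw [Matrix.smul_mulVec, dotProduct_smul]
    exact mul_nonneg (Complex.zero_le_real.mpr hα) (hA.dotProduct_mulVec_nonneg x)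

lemma psd_of_proj {R : Mn} (hH : R.IsHermitian) (hI : R * R = R) : R.PosSemidef := by
  have h := Matrix.posSemidef_conjTranspose_mul_self R
  rwa [hH.eq, hI] at h

lemma ext_of_mulVec {A B : Mn} (h : ∀ x, A *ᵥ x = B *ᵥ x) : A = B := by
  ext i j
  have := congrFun (h (Pi.single j 1)) i
  simpa [Matrix.mulVec_single] using this

lemma mulVec_zero_of_psd_le {A B : Mn} (hA : A.PosSemidef) (hBA : (B - A).PosSemidef)
    {x : Fin n → ℂ} (hx : B *ᵥ x = 0) : A *ᵥ x = 0 := by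
  have h1 : star x ⬝ᵥ (B - A) *ᵥ x = - (star x ⬝ᵥ A *ᵥ x) := by
    rw [Matrix.sub_mulVec, dotProduct_sub, hx, dotProduct_zero, zero_sub]
  have h2 := hBA.dotProduct_mulVec_nonneg x
  rw [h1] at h2
  have h3 := hA.dotProduct_mulVec_nonneg x
  have h4 : star x ⬝ᵥ A *ᵥ x = 0 := le_antisymm (neg_nonneg.mp h2) h3
  exact (hA.dotProduct_mulVec_zero_iff x).mp h4

lemma rank_add_ker (A : Mn) :
    A.rank + Module.finrank ℂ (LinearMap.ker A.mulVecLin) = n := by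
  have h := LinearMap.finrank_range_add_finrank_ker A.mulVecLin
  rw [Matrix.rank]
  simpa using h

lemma ker_le_of_mulVec {A B : Mn} (h : ∀ x, B *ᵥ x = 0 → A *ᵥ x = 0) :
    LinearMap.ker B.mulVecLin ≤ LinearMap.ker A.mulVecLin := by
  intro x hx
  rw [LinearMap.mem_ker, Matrix.mulVecLin_apply] at hx ⊢
  exact h x hx

lemma rank_le_of_ker_le {A B : Mn} (h : ∀ x, B *ᵥ x = 0 → A *ᵥ x = 0) :
    A.rank ≤ B.rank := by
  have h1 := rank_add_ker A
  have h2 := rank_add_ker B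
  have h3 : Module.finrank ℂ (LinearMap.ker B.mulVecLin) ≤
      Module.finrank ℂ (LinearMap.ker A.mulVecLin) :=
    Submodule.finrank_mono (ker_le_of_mulVec h)
  omega

lemma proj_eq_of_ker_eq {S T : Mn} (hSh : S.IsHermitian) (hS2 : S * S = S)
    (hTh : T.IsHermitian) (hT2 : T * T = T)
    (h : ∀ x, S *ᵥ x = 0 ↔ T *ᵥ x = 0) : S = T := by
  have h1 : T * S = T := by
    apply ext_of_mulVec
    intro x
    have hS0 : S *ᵥ (x - S *ᵥ x) = 0 := by
      rw [Matrix.mulVec_sub, Matrix.mulVec_mulVec, hS2, sub_self]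
    have hT0 : T *ᵥ (x - S *ᵥ x) = 0 := (h _).mp hS0
    rw [Matrix.mulVec_sub] at hT0
    rw [← Matrix.mulVec_mulVec]
    exact (sub_eq_zero.mp hT0).symm
  have h2 : S * T = S := by
    apply ext_of_mulVec
    intro x
    have hT0 : T *ᵥ (x - T *ᵥ x) = 0 := by
      rw [Matrix.mulVec_sub, Matrix.mulVec_mulVec, hT2, sub_self]
    have hS0 : S *ᵥ (x - T *ᵥ x) = 0 := (h _).mpr hT0
    rw [Matrix.mulVec_sub] at hS0
    rw [← Matrix.mulVec_mulVec]
    exact (sub_eq_zero.mp hS0).symm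
  have h3 : (T * S)ᴴ = S := by
    rw [Matrix.conjTranspose_mul, hSh.eq, hTh.eq, h2]
  rw [h1] at h3
  rw [← h3, hTh.eq]

lemma proj_eq_of_ker_le_rank_le {S T : Mn} (hSh : S.IsHermitian) (hS2 : S * S = S)
    (hTh : T.IsHermitian) (hT2 : T * T = T)
    (hker : ∀ x, T *ᵥ x = 0 → S *ᵥ x = 0) (hrank : T.rank ≤ S.rank) : S = T := by
  have hle : LinearMap.ker T.mulVecLin ≤ LinearMap.ker S.mulVecLin := ker_le_of_mulVec hker
  have hSrT : S.rank ≤ T.rank := rank_le_of_ker_le hker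
  have h1 := rank_add_ker S
  have h2 := rank_add_ker T
  have hfr : Module.finrank ℂ (LinearMap.ker T.mulVecLin) =
      Module.finrank ℂ (LinearMap.ker S.mulVecLin) := by omega
  have hkeq : LinearMap.ker T.mulVecLin = LinearMap.ker S.mulVecLin :=
    Submodule.eq_of_le_of_finrank_eq hle hfr
  apply proj_eq_of_ker_eq hSh hS2 hTh hT2
  intro x
  constructor
  · intro hx
    have : x ∈ LinearMap.ker S.mulVecLin := by
      rw [LinearMap.mem_ker, Matrix.mulVecLin_apply]; exact hx
    rw [← hkeq, LinearMap.mem_ker, Matrix.mulVecLin_apply] at this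
    exact this
  · intro hx
    have : x ∈ LinearMap.ker T.mulVecLin := by
      rw [LinearMap.mem_ker, Matrix.mulVecLin_apply]; exact hx
    rw [hkeq, LinearMap.mem_ker, Matrix.mulVecLin_apply] at this
    exact this

lemma eq_zero_of_rank_zero {A : Mn} (h : A.rank = 0) : A = 0 := by
  have h1 : LinearMap.range A.mulVecLin = ⊥ := by
    rw [← Submodule.finrank_eq_zero (R := ℂ)]
    rw [Matrix.rank] at h
    exact h
  have h2 : A.mulVecLin = 0 := LinearMap.range_eq_bot.mp h1
  apply ext_of_mulVec (B := (0 : Mn))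
  intro x
  have := congrFun (congrArg (fun f => f.toFun) h2) x
  simpa [Matrix.mulVecLin_apply] using this

lemma spec_subset_of_quad {A : Mn} {a : ℂ} (hA : A * A = a • A) :
    spectrum ℂ A ⊆ {0, a} := by
  intro z hz
  by_contra hmem
  simp only [Set.mem_insert_iff, Set.mem_singleton_iff, not_or] at hmem
  obtain ⟨hz0, hza⟩ := hmem
  rw [spectrum.mem_iff] at hz
  apply hz
  have hsub : z - a ≠ 0 := sub_ne_zero.mpr hza
  have hu : z * (z - a) ≠ 0 := mul_ne_zero hz0 hsub
  have hprod : (z • (1:Mn) - A) * (A + (z - a) • 1) = (z * (z - a)) • (1:Mn) := by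
    simp only [sub_mul, mul_add, add_mul, smul_mul_assoc, mul_smul_comm, one_mul, mul_one,
      hA, smul_smul]
    module
  have hprod' : (A + (z - a) • 1) * (z • (1:Mn) - A) = (z * (z - a)) • (1:Mn) := by
    simp only [sub_mul, mul_sub, mul_add, add_mul, smul_mul_assoc, mul_smul_comm, one_mul,
      mul_one, hA, smul_smul]
    module
  have halg : algebraMap ℂ Mn z - A = z • (1:Mn) - A := by
    rw [Algebra.algebraMap_eq_smul_one]
  refine isUnit_iff_exists.mpr ⟨(z * (z - a))⁻¹ • (A + (z - a) • 1), ?_, ?_⟩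
  · rw [halg, mul_smul_comm, hprod, smul_smul, inv_mul_cancel₀ hu, one_smul]
  · rw [halg, smul_mul_assoc, hprod', smul_smul, inv_mul_cancel₀ hu, one_smul]

lemma eig_mem_complex_spectrum {B : Mn} (hB : B.IsHermitian) (i : Fin n) :
    ((hB.eigenvalues i : ℂ)) ∈ spectrum ℂ B := by
  have h1 := hB.eigenvalues_mem_spectrum_real i
  rw [spectrum.mem_iff] at h1 ⊢
  rwa [IsScalarTower.algebraMap_apply ℝ ℂ Mn] at h1

lemma quad_of_spec {B : Mn} (hB : B.IsHermitian) {a : ℝ}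
    (hs : spectrum ℂ B ⊆ {0, (a:ℂ)}) : B * B = (a:ℂ) • B := by
  have heig : ∀ i, hB.eigenvalues i = 0 ∨ hB.eigenvalues i = a := by
    intro i
    have h2 := hs (eig_mem_complex_spectrum hB i)
    simp only [Set.mem_insert_iff, Set.mem_singleton_iff] at h2
    rcases h2 with h | h
    · left; exact_mod_cast h
    · right; exact_mod_cast h
  set V : Mn := (hB.eigenvectorUnitary : Mn) with hV
  set D : Mn := Matrix.diagonal ((RCLike.ofReal ∘ hB.eigenvalues) : Fin n → ℂ) with hD
  have hU : star V * V = 1 := (Matrix.mem_unitaryGroup_iff').mp hB.eigenvectorUnitary.2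
  have hDD : D * D = (a:ℂ) • D := by
    rw [hD, Matrix.diagonal_mul_diagonal]
    ext i j
    by_cases hij : i = j
    · subst hij
      rcases heig i with h | h <;> simp [Matrix.diagonal_apply, h, Function.comp]
    · simp [Matrix.diagonal_apply, hij, Function.comp]
  have hspec := hB.spectral_theorem
  rw [Unitary.conjStarAlgAut_apply, ← hV, ← hD] at hspec
  conv_lhs => rw [hspec]
  have hassoc : V * D * star V * (V * D * star V) = V * (D * D) * star V := by
    simp only [← mul_assoc]
    rw [mul_assoc (V * D) (star V) V, hU, mul_one, mul_assoc V D D]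
  rw [hassoc, hDD, Matrix.mul_smul, Matrix.smul_mul, ← hspec]

lemma trace_proj {R : Mn} (hH : R.IsHermitian) (hI : R * R = R) :
    R.trace = (R.rank : ℂ) := by
  classical
  have hq : R * R = (1:ℂ) • R := by rw [hI, one_smul]
  have hs := spec_subset_of_quad hq
  have heig : ∀ i, hH.eigenvalues i = 0 ∨ hH.eigenvalues i = 1 := by
    intro i
    have h2 := hs (eig_mem_complex_spectrum hH i)
    simp only [Set.mem_insert_iff, Set.mem_singleton_iff] at h2
    rcases h2 with h | h
    · left; exact_mod_cast h
    · right; exact_mod_cast h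
  set V : Mn := (hH.eigenvectorUnitary : Mn) with hV
  set D : Mn := Matrix.diagonal ((RCLike.ofReal ∘ hH.eigenvalues) : Fin n → ℂ) with hD
  have hU : star V * V = 1 := (Matrix.mem_unitaryGroup_iff').mp hH.eigenvectorUnitary.2
  have htr : R.trace = ∑ i, (hH.eigenvalues i : ℂ) := by
    conv_lhs => rw [hH.spectral_theorem, Unitary.conjStarAlgAut_apply, ← hV, ← hD]
    rw [Matrix.trace_mul_cycle, hU, Matrix.one_mul, hD, Matrix.trace_diagonal]
    simp [Function.comp]
  rw [htr, hH.rank_eq_card_non_zero_eigs]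
  have hterm : ∀ i, ((hH.eigenvalues i : ℂ)) = if hH.eigenvalues i ≠ 0 then 1 else 0 := by
    intro i
    rcases heig i with h | h <;> simp [h]
  rw [Finset.sum_congr rfl (fun i _ => hterm i), Finset.sum_boole, Fintype.card_subtype]

lemma proj_of_rank_n {R : Mn} (hI : R * R = R) (h : R.rank = n) : R = 1 := by
  have h1 := rank_add_ker R
  have h2 : Module.finrank ℂ (LinearMap.ker R.mulVecLin) = 0 := by omega
  have h3 : LinearMap.ker R.mulVecLin = ⊥ := Submodule.finrank_eq_zero.mp h2
  apply ext_of_mulVec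
  intro x
  have hx : R *ᵥ (R *ᵥ x - x) = 0 := by
    rw [Matrix.mulVec_sub, Matrix.mulVec_mulVec, hI, sub_self]
  have : (R *ᵥ x - x) ∈ LinearMap.ker R.mulVecLin := by
    rw [LinearMap.mem_ker, Matrix.mulVecLin_apply]; exact hx
  rw [h3, Submodule.mem_bot] at this
  rw [Matrix.one_mulVec]
  exact sub_eq_zero.mp this

noncomputable def Ev (v : Fin n → ℂ) : Matrix (Fin n) (Fin n) ℂ :=
  Matrix.of fun i j => (star v ⬝ᵥ v)⁻¹ * (v i * star (v j))

section Evec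

variable {v : Fin n → ℂ}

lemma cne (hv : v ≠ 0) : (star v ⬝ᵥ v) ≠ 0 := fun h => hv (dotProduct_star_self_eq_zero.mp h)

lemma cstar : star (star v ⬝ᵥ v) = star v ⬝ᵥ v := by
  rw [← star_dotProduct_star, star_star]

lemma Ev_herm : (Ev v).IsHermitian := by
  unfold Matrix.IsHermitian
  ext i j
  rw [Matrix.conjTranspose_apply]
  simp only [Ev, Matrix.of_apply, star_mul', star_star, star_inv₀, cstar]
  ring

lemma Ev_sum : ∑ k, star (v k) * v k = star v ⬝ᵥ v := by
  simp [dotProduct]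

lemma Ev_idem (hv : v ≠ 0) : Ev v * Ev v = Ev v := by
  ext i j
  rw [Matrix.mul_apply]
  simp only [Ev, Matrix.of_apply]
  have h1 : ∀ k, ((star v ⬝ᵥ v)⁻¹ * (v i * star (v k))) * ((star v ⬝ᵥ v)⁻¹ * (v k * star (v j)))
      = ((star v ⬝ᵥ v)⁻¹ * (star v ⬝ᵥ v)⁻¹ * (v i * star (v j))) * (star (v k) * v k) := by
    intro k; ring
  rw [Finset.sum_congr rfl (fun k _ => h1 k), ← Finset.mul_sum, Ev_sum]
  field_simp [cne hv]

lemma Ev_trace (hv : v ≠ 0) : (Ev v).trace = 1 := by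
  rw [Matrix.trace]
  simp only [Matrix.diag_apply, Ev, Matrix.of_apply]
  rw [← Finset.mul_sum]
  have h2 : ∑ k, v k * star (v k) = star v ⬝ᵥ v := by
    rw [← Ev_sum (v := v)]
    exact Finset.sum_congr rfl fun k _ => mul_comm _ _
  rw [h2, inv_mul_cancel₀ (cne hv)]

lemma Ev_mul_left {R : Matrix (Fin n) (Fin n) ℂ} (hRv : R *ᵥ v = v) : R * Ev v = Ev v := by
  ext i j
  rw [Matrix.mul_apply]
  simp only [Ev, Matrix.of_apply]
  have h1 : ∀ k, R i k * ((star v ⬝ᵥ v)⁻¹ * (v k * star (v j)))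
      = ((star v ⬝ᵥ v)⁻¹ * star (v j)) * (R i k * v k) := by intro k; ring
  rw [Finset.sum_congr rfl (fun k _ => h1 k), ← Finset.mul_sum]
  have h2 : ∑ k, R i k * v k = v i := by
    have := congrFun hRv i
    simpa [Matrix.mulVec, dotProduct] using this
  rw [h2]; ring

lemma Ev_mul_left0 {R : Matrix (Fin n) (Fin n) ℂ} (hRv : R *ᵥ v = 0) : R * Ev v = 0 := by
  ext i j
  rw [Matrix.mul_apply]
  simp only [Ev, Matrix.of_apply]
  have h1 : ∀ k, R i k * ((star v ⬝ᵥ v)⁻¹ * (v k * star (v j)))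
      = ((star v ⬝ᵥ v)⁻¹ * star (v j)) * (R i k * v k) := by intro k; ring
  rw [Finset.sum_congr rfl (fun k _ => h1 k), ← Finset.mul_sum]
  have h2 : ∑ k, R i k * v k = 0 := by
    have := congrFun hRv i
    simpa [Matrix.mulVec, dotProduct] using this
  rw [h2]
  simp

lemma Ev_star_row {R : Matrix (Fin n) (Fin n) ℂ} (hH : R.IsHermitian) (j : Fin n) :
    ∑ k, star (v k) * R k j = star ((R *ᵥ v) j) := by
  have hRk : ∀ k, R k j = star (R j k) := by
    intro k
    conv_lhs => rw [← hH.eq]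
    rw [Matrix.conjTranspose_apply]
  have : ∀ k, star (v k) * R k j = star (R j k * v k) := by
    intro k; rw [hRk k, ← star_mul', mul_comm (v k) (R j k)]
  rw [Finset.sum_congr rfl (fun k _ => this k), ← star_sum]
  rfl

lemma Ev_mul_right {R : Matrix (Fin n) (Fin n) ℂ} (hH : R.IsHermitian) (hRv : R *ᵥ v = v) :
    Ev v * R = Ev v := by
  ext i j
  rw [Matrix.mul_apply]
  simp only [Ev, Matrix.of_apply]
  have h1 : ∀ k, ((star v ⬝ᵥ v)⁻¹ * (v i * star (v k))) * R k j
      = ((star v ⬝ᵥ v)⁻¹ * v i) * (star (v k) * R k j) := by intro k; ring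
  rw [Finset.sum_congr rfl (fun k _ => h1 k), ← Finset.mul_sum, Ev_star_row hH j, hRv]
  ring

lemma Ev_mul_right0 {R : Matrix (Fin n) (Fin n) ℂ} (hH : R.IsHermitian) (hRv : R *ᵥ v = 0) :
    Ev v * R = 0 := by
  ext i j
  rw [Matrix.mul_apply]
  simp only [Ev, Matrix.of_apply]
  have h1 : ∀ k, ((star v ⬝ᵥ v)⁻¹ * (v i * star (v k))) * R k j
      = ((star v ⬝ᵥ v)⁻¹ * v i) * (star (v k) * R k j) := by intro k; ring
  rw [Finset.sum_congr rfl (fun k _ => h1 k), ← Finset.mul_sum, Ev_star_row hH j, hRv]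
  simp

end Evec

lemma herm_real_smul {B : Matrix (Fin n) (Fin n) ℂ} (hB : B.IsHermitian) (r : ℝ) :
    ((r : ℂ) • B).IsHermitian := by
  unfold Matrix.IsHermitian
  rw [Matrix.conjTranspose_smul, hB.eq]
  congr 1
  simp

lemma rank_lt_aux {QR QS : Matrix (Fin n) (Fin n) ℂ}
    (hQRh : QR.IsHermitian) (hQR2 : QR * QR = QR)
    (hQSh : QS.IsHermitian) (hQS2 : QS * QS = QS)
    (hker : ∀ x, QS *ᵥ x = 0 → QR *ᵥ x = 0) (hne : QR ≠ QS) : QR.rank < QS.rank := by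
  have h1 : QR.rank ≤ QS.rank := rank_le_of_ker_le hker
  rcases lt_or_eq_of_le h1 with h | h
  · exact h
  · exact absurd (proj_eq_of_ker_le_rank_le hQRh hQR2 hQSh hQS2 hker h.ge) hne

end Stmt8Aux
open Stmt8Aux in
/-- An injective, order-preserving, spectrum-shrinking map on positive semidefinite
matrices which maps rank-`k` orthogonal projections to rank-`k` orthogonal projections
satisfies `φ(αP) = αφ(P)` for every orthogonal projection `P` and scalar `α ≥ 0`. -/
theorem stmt8 {n : ℕ}
    (φ : Matrix (Fin n) (Fin n) ℂ → Matrix (Fin n) (Fin n) ℂ)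
    (hpsd : ∀ A : Matrix (Fin n) (Fin n) ℂ, A.PosSemidef → (φ A).PosSemidef)
    (hinj : ∀ A B : Matrix (Fin n) (Fin n) ℂ, A.PosSemidef → B.PosSemidef →
      φ A = φ B → A = B)
    (horder : ∀ A B : Matrix (Fin n) (Fin n) ℂ, A.PosSemidef → B.PosSemidef →
      (B - A).PosSemidef → (φ B - φ A).PosSemidef)
    (hspec : ∀ A : Matrix (Fin n) (Fin n) ℂ, A.PosSemidef →
      spectrum ℂ (φ A) ⊆ spectrum ℂ A)
    (hproj : ∀ P : Matrix (Fin n) (Fin n) ℂ, P.IsHermitian → P * P = P →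
      (φ P).IsHermitian ∧ φ P * φ P = φ P ∧ (φ P).rank = P.rank) :
    ∀ P : Matrix (Fin n) (Fin n) ℂ, P.IsHermitian → P * P = P →
      ∀ α : ℝ, 0 ≤ α → φ (α • P) = α • φ P := by
  intro P hHP hIP α hα0
  rw [real_smul_eq, real_smul_eq α (φ P)]
  rcases eq_or_lt_of_le hα0 with h0 | hα
  · -- α = 0
    have h00 : ((α:ℝ):ℂ) = 0 := by rw [← h0]; simp
    rw [h00, zero_smul, zero_smul]
    have hz : (0 : Matrix (Fin n) (Fin n) ℂ).IsHermitian := by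
      unfold Matrix.IsHermitian; simp
    have hz2 : (0 : Matrix (Fin n) (Fin n) ℂ) * 0 = 0 := by simp
    obtain ⟨-, -, hrk⟩ := hproj 0 hz hz2
    rw [Matrix.rank_zero] at hrk
    exact eq_zero_of_rank_zero hrk
  · -- α > 0
    have ha : ((α:ℝ):ℂ) ≠ 0 := Complex.ofReal_ne_zero.mpr (ne_of_gt hα)
    -- basic facts about φ on α • (projections)
    have fact : ∀ R : Matrix (Fin n) (Fin n) ℂ, R.IsHermitian → R * R = R →
        ((α:ℂ) • R).PosSemidef ∧ (φ ((α:ℂ) • R)).PosSemidef ∧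
        (φ ((α:ℂ) • R) * φ ((α:ℂ) • R) = (α:ℂ) • φ ((α:ℂ) • R)) ∧
        ((α:ℂ)⁻¹ • φ ((α:ℂ) • R)).IsHermitian ∧
        (((α:ℂ)⁻¹ • φ ((α:ℂ) • R)) * ((α:ℂ)⁻¹ • φ ((α:ℂ) • R))
          = (α:ℂ)⁻¹ • φ ((α:ℂ) • R)) := by
      intro R hH hI
      have hpsdR : ((α:ℂ) • R).PosSemidef := psd_smul (psd_of_proj hH hI) hα0
      have hBpsd : (φ ((α:ℂ) • R)).PosSemidef := hpsd _ hpsdR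
      have hq : ((α:ℂ) • R) * ((α:ℂ) • R) = (α:ℂ) • ((α:ℂ) • R) := by
        rw [Matrix.smul_mul, Matrix.mul_smul, hI]
      have hs1 : spectrum ℂ (φ ((α:ℂ) • R)) ⊆ {0, (α:ℂ)} :=
        subset_trans (hspec _ hpsdR) (spec_subset_of_quad hq)
      have hquad : φ ((α:ℂ) • R) * φ ((α:ℂ) • R) = (α:ℂ) • φ ((α:ℂ) • R) :=
        quad_of_spec hBpsd.1 hs1
      refine ⟨hpsdR, hBpsd, hquad, ?_, ?_⟩
      · have := herm_real_smul hBpsd.1 α⁻¹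
        rwa [Complex.ofReal_inv] at this
      · rw [Matrix.smul_mul, Matrix.mul_smul, hquad, smul_smul, smul_smul]
        congr 1
        field_simp
    -- kernel transfer and strict rank monotonicity
    have kert : ∀ R S : Matrix (Fin n) (Fin n) ℂ, R.IsHermitian → R * R = R →
        S.IsHermitian → S * S = S → (S - R).PosSemidef →
        ∀ x, ((α:ℂ)⁻¹ • φ ((α:ℂ) • S)) *ᵥ x = 0 → ((α:ℂ)⁻¹ • φ ((α:ℂ) • R)) *ᵥ x = 0 := by
      intro R S hRh hR2 hSh hS2 hRS x hx
      obtain ⟨hpsdR, hBR, -, -, -⟩ := fact R hRh hR2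
      obtain ⟨hpsdS, hBS, -, -, -⟩ := fact S hSh hS2
      have hord : (φ ((α:ℂ) • S) - φ ((α:ℂ) • R)).PosSemidef := by
        apply horder _ _ hpsdR hpsdS
        rw [← smul_sub]
        exact psd_smul hRS hα0
      rw [Matrix.smul_mulVec] at hx ⊢
      have hx0 : φ ((α:ℂ) • S) *ᵥ x = 0 := by
        rcases smul_eq_zero.mp hx with h | h
        · exact absurd h (inv_ne_zero ha)
        · exact h
      rw [mulVec_zero_of_psd_le hBR hord hx0, smul_zero]
    have hQne : ∀ R S : Matrix (Fin n) (Fin n) ℂ, R.PosSemidef → S.PosSemidef → R ≠ S →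
        (α:ℂ)⁻¹ • φ ((α:ℂ) • R) ≠ (α:ℂ)⁻¹ • φ ((α:ℂ) • S) := by
      intro R S hRp hSp hne h
      apply hne
      have h1 : φ ((α:ℂ) • R) = φ ((α:ℂ) • S) :=
        smul_right_injective _ (inv_ne_zero ha) h
      have h2 : (α:ℂ) • R = (α:ℂ) • S :=
        hinj _ _ (psd_smul hRp hα0) (psd_smul hSp hα0) h1
      exact smul_right_injective _ ha h2
    have strict : ∀ R S : Matrix (Fin n) (Fin n) ℂ, R.IsHermitian → R * R = R →
        S.IsHermitian → S * S = S → (S - R).PosSemidef → R ≠ S →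
        ((α:ℂ)⁻¹ • φ ((α:ℂ) • R)).rank < ((α:ℂ)⁻¹ • φ ((α:ℂ) • S)).rank := by
      intro R S hRh hR2 hSh hS2 hRS hne
      obtain ⟨-, -, -, hQRh, hQR2⟩ := fact R hRh hR2
      obtain ⟨-, -, -, hQSh, hQS2⟩ := fact S hSh hS2
      exact rank_lt_aux hQRh hQR2 hQSh hQS2 (kert R S hRh hR2 hSh hS2 hRS)
        (hQne R S (psd_of_proj hRh hR2) (psd_of_proj hSh hS2) hne)
    -- lower bound on rank
    have lemA : ∀ m : ℕ, ∀ R : Matrix (Fin n) (Fin n) ℂ, R.IsHermitian → R * R = R →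
        R.rank = m → m ≤ ((α:ℂ)⁻¹ • φ ((α:ℂ) • R)).rank := by
      intro m
      induction m with
      | zero => intro R _ _ _; exact Nat.zero_le _
      | succ m ih =>
        intro R hH hI hrk
        have hR0 : R ≠ 0 := by
          intro h
          rw [h, Matrix.rank_zero] at hrk
          omega
        have hex : ∃ x, R *ᵥ x ≠ 0 := by
          by_contra h
          push_neg at h
          exact hR0 (ext_of_mulVec (fun x => by rw [h x, Matrix.zero_mulVec]))
        obtain ⟨x, hx⟩ := hex
        set v : Fin n → ℂ := R *ᵥ x with hvdef
        have hv : v ≠ 0 := hx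
        have hRv : R *ᵥ v = v := by
          rw [hvdef, Matrix.mulVec_mulVec, hI]
        have hEh := Ev_herm (v := v)
        have hEE := Ev_idem hv
        have hRE := Ev_mul_left hRv
        have hER := Ev_mul_right hH hRv
        have hEtr := Ev_trace hv
        set R' : Matrix (Fin n) (Fin n) ℂ := R - Ev v with hR'def
        have hR'h : R'.IsHermitian := hH.sub hEh
        have hR'2 : R' * R' = R' := by
          rw [hR'def, sub_mul, mul_sub, mul_sub, hI, hRE, hER, hEE]
          abel
        have hdiff : (R - R').PosSemidef := by
          rw [hR'def, sub_sub_cancel]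
          exact psd_of_proj hEh hEE
        have hne : R' ≠ R := by
          intro h
          rw [hR'def] at h
          have hE0 : Ev v = 0 := sub_eq_self.mp h
          rw [hE0, Matrix.trace_zero] at hEtr
          exact one_ne_zero hEtr.symm
        have hR'rk : R'.rank = m := by
          have ht := trace_proj hR'h hR'2
          rw [hR'def, Matrix.trace_sub, trace_proj hH hI, hEtr, hrk] at ht
          have : ((R - Ev v).rank : ℂ) = (m : ℂ) := by
            rw [← ht]
            push_cast
            ring
          rw [hR'def]
          exact_mod_cast this
        have h1 := ih R' hR'h hR'2 hR'rk
        have h2 := strict R' R hR'h hR'2 hH hI hdiff hne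
        omega
    -- upper bound on rank
    have lemB : ∀ k : ℕ, ∀ R : Matrix (Fin n) (Fin n) ℂ, R.IsHermitian → R * R = R →
        R.rank + k = n → ((α:ℂ)⁻¹ • φ ((α:ℂ) • R)).rank ≤ R.rank := by
      intro k
      induction k with
      | zero =>
        intro R _ _ hrk
        have h := Matrix.rank_le_card_width ((α:ℂ)⁻¹ • φ ((α:ℂ) • R))
        simp only [Fintype.card_fin] at h
        omega
      | succ k ih =>
        intro R hH hI hrk
        have h1 := rank_add_ker R
        have hker_pos : 0 < Module.finrank ℂ (LinearMap.ker R.mulVecLin) := by omega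
        have hkerne : LinearMap.ker R.mulVecLin ≠ ⊥ := by
          intro h
          rw [h, finrank_bot] at hker_pos
          omega
        obtain ⟨w, hwmem, hw0⟩ := Submodule.ne_bot_iff _ |>.mp hkerne
        have hRw : R *ᵥ w = 0 := by
          rw [LinearMap.mem_ker, Matrix.mulVecLin_apply] at hwmem
          exact hwmem
        have hEh := Ev_herm (v := w)
        have hEE := Ev_idem hw0
        have hRE := Ev_mul_left0 hRw
        have hER := Ev_mul_right0 hH hRw
        have hEtr := Ev_trace hw0
        set R' : Matrix (Fin n) (Fin n) ℂ := R + Ev w with hR'def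
        have hR'h : R'.IsHermitian := hH.add hEh
        have hR'2 : R' * R' = R' := by
          rw [hR'def, add_mul, mul_add, mul_add, hI, hEE, hRE, hER]
          abel
        have hdiff : (R' - R).PosSemidef := by
          rw [hR'def, add_sub_cancel_left]
          exact psd_of_proj hEh hEE
        have hne : R ≠ R' := by
          intro h
          rw [hR'def] at h
          have hE0 : Ev w = 0 := by
            have := (left_eq_add).mp h
            exact this
          rw [hE0, Matrix.trace_zero] at hEtr
          exact one_ne_zero hEtr.symm
        have hR'rk : R'.rank = R.rank + 1 := by
          have ht := trace_proj hR'h hR'2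
          rw [hR'def, Matrix.trace_add, trace_proj hH hI, hEtr] at ht
          have : ((R + Ev w).rank : ℂ) = ((R.rank + 1 : ℕ) : ℂ) := by
            rw [← ht]
            push_cast
            ring
          exact_mod_cast this
        have h2 := ih R' hR'h hR'2 (by omega)
        have h3 := strict R R' hH hI hR'h hR'2 hdiff hne
        omega
    -- rank of Q P equals rank of P
    obtain ⟨-, hBpsd, hquad, hQh, hQ2⟩ := fact P hHP hIP
    have hrkn : P.rank ≤ n := by
      have := Matrix.rank_le_card_width P
      simpa using this
    have hQrk : ((α:ℂ)⁻¹ • φ ((α:ℂ) • P)).rank = P.rank := by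
      have hA := lemA P.rank P hHP hIP rfl
      have hB := lemB (n - P.rank) P hHP hIP (by omega)
      omega
    obtain ⟨hPh', hP2', hPrk'⟩ := hproj P hHP hIP
    -- compare Q P with φ P
    have main : (α:ℂ)⁻¹ • φ ((α:ℂ) • P) = φ P := by
      rcases le_total α 1 with hle | hge
      · -- α ≤ 1 : α•P ≤ P
        have hord : (φ P - φ ((α:ℂ) • P)).PosSemidef := by
          apply horder _ _ (psd_smul (psd_of_proj hHP hIP) hα0) (psd_of_proj hHP hIP)
          have : P - (α:ℂ) • P = ((1 - α : ℝ) : ℂ) • P := by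
            push_cast
            rw [sub_smul, one_smul]
          rw [this]
          exact psd_smul (psd_of_proj hHP hIP) (by linarith)
        have hker : ∀ x, φ P *ᵥ x = 0 → ((α:ℂ)⁻¹ • φ ((α:ℂ) • P)) *ᵥ x = 0 := by
          intro x hx
          rw [Matrix.smul_mulVec,
            mulVec_zero_of_psd_le hBpsd hord hx, smul_zero]
        exact proj_eq_of_ker_le_rank_le hQh hQ2 hPh' hP2' hker (by omega)
      · -- 1 ≤ α : P ≤ α•P
        have hord : (φ ((α:ℂ) • P) - φ P).PosSemidef := by
          apply horder _ _ (psd_of_proj hHP hIP) (psd_smul (psd_of_proj hHP hIP) hα0)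
          have : (α:ℂ) • P - P = ((α - 1 : ℝ) : ℂ) • P := by
            push_cast
            rw [sub_smul, one_smul]
          rw [this]
          exact psd_smul (psd_of_proj hHP hIP) (by linarith)
        have hker : ∀ x, ((α:ℂ)⁻¹ • φ ((α:ℂ) • P)) *ᵥ x = 0 → φ P *ᵥ x = 0 := by
          intro x hx
          rw [Matrix.smul_mulVec] at hx
          have hx0 : φ ((α:ℂ) • P) *ᵥ x = 0 := by
            rcases smul_eq_zero.mp hx with h | h
            · exact absurd h (inv_ne_zero ha)
            · exact h
          exact mulVec_zero_of_psd_le (hpsd P (psd_of_proj hHP hIP)) hord hx0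
        exact (proj_eq_of_ker_le_rank_le hPh' hP2' hQh hQ2 hker (by omega)).symm
    calc φ ((α:ℂ) • P) = (α:ℂ) • ((α:ℂ)⁻¹ • φ ((α:ℂ) • P)) := by
          rw [smul_smul, mul_inv_cancel₀ ha, one_smul]
      _ = (α:ℂ) • φ P := by rw [main]
end

section
/- Let φ be a map on positive semidefinite n×n complex matrices (n ≥ 2) that preserves order, preserves the characteristic polynomial, fixes all rank-one orthogonal projections, and fixes all matrices of the form tI − cP (t > 0, 0 ≤ c ≤ t, P a rank-one projection). Then φ(A) = A for every positive semidefinite A. -/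
open Matrix
open scoped ComplexOrder

/-- A map on positive semidefinite matrices (`n ≥ 2`) which preserves the Loewner order,
preserves the characteristic polynomial, fixes all rank-one orthogonal projections and
fixes all matrices `tI - cP` (`t > 0`, `0 ≤ c ≤ t`, `P` a rank-one projection) is the
identity on positive semidefinite matrices. -/
theorem stmt15 {n : ℕ} (hn : 2 ≤ n)
    (φ : Matrix (Fin n) (Fin n) ℂ → Matrix (Fin n) (Fin n) ℂ)
    (hpsd : ∀ A : Matrix (Fin n) (Fin n) ℂ, A.PosSemidef → (φ A).PosSemidef)
    (horder : ∀ A B : Matrix (Fin n) (Fin n) ℂ, A.PosSemidef → B.PosSemidef →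
      (B - A).PosSemidef → (φ B - φ A).PosSemidef)
    (hcharpoly : ∀ A : Matrix (Fin n) (Fin n) ℂ, A.PosSemidef →
      (φ A).charpoly = A.charpoly)
    (hfixproj : ∀ P : Matrix (Fin n) (Fin n) ℂ, P.IsHermitian → P * P = P →
      P.rank = 1 → φ P = P)
    (hfixtc : ∀ t c : ℝ, 0 < t → 0 ≤ c → c ≤ t →
      ∀ P : Matrix (Fin n) (Fin n) ℂ, P.IsHermitian → P * P = P → P.rank = 1 →
        φ (t • (1 : Matrix (Fin n) (Fin n) ℂ) - c • P) =
          t • (1 : Matrix (Fin n) (Fin n) ℂ) - c • P) :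
    ∀ A : Matrix (Fin n) (Fin n) ℂ, A.PosSemidef → φ A = A := by
  have hne : Nonempty (Fin n) := ⟨⟨0, by omega⟩⟩
  intro A hA
  have hH : A.IsHermitian := hA.1
  set U : Matrix (Fin n) (Fin n) ℂ := (hH.eigenvectorUnitary : Matrix (Fin n) (Fin n) ℂ) with hUdef
  have hUmem : U ∈ Matrix.unitaryGroup (Fin n) ℂ := hH.eigenvectorUnitary.2
  have hU1 : Uᴴ * U = 1 := by simpa [star_eq_conjTranspose] using hUmem.1
  have hU2 : U * Uᴴ = 1 := by simpa [star_eq_conjTranspose] using hUmem.2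
  set μ : Fin n → ℝ := hH.eigenvalues with hμdef
  have hspec : A = U * diagonal (fun k => (μ k : ℂ)) * Uᴴ := by
    have h := hH.spectral_theorem
    simp only [Function.comp_def, ← star_eq_conjTranspose] at h ⊢
    exact h
  have hμ0 : ∀ k, 0 ≤ μ k := fun k => hA.eigenvalues_nonneg k
  set t : ℝ := (∑ k, μ k) + 1 with htdef
  have htμ : ∀ j, μ j ≤ t := by
    intro j
    have h1 := Finset.single_le_sum (fun i _ => hμ0 i) (Finset.mem_univ j)
    rw [htdef]; linarith
  have ht0 : 0 < t := by
    have : 0 ≤ ∑ k, μ k := Finset.sum_nonneg fun i _ => hμ0 i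
    rw [htdef]; linarith
  -- the standard diagonal rank-one projections
  set D : Fin n → Matrix (Fin n) (Fin n) ℂ := fun j => diagonal (Pi.single j (1:ℂ)) with hDdef
  have hsingle_star : ∀ j : Fin n, star (Pi.single j (1:ℂ) : Fin n → ℂ) = Pi.single j (1:ℂ) := by
    intro j; funext i
    by_cases h : i = j <;> simp [Pi.single_apply, h]
  have hDH : ∀ j, (D j)ᴴ = D j := by
    intro j
    rw [hDdef]
    simp only [diagonal_conjTranspose]
    rw [hsingle_star]
  have hsingle_mul : ∀ j : Fin n, (Pi.single j (1:ℂ) : Fin n → ℂ) * Pi.single j 1 = Pi.single j 1 := by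
    intro j; funext i
    by_cases h : i = j <;> simp [Pi.single_apply, h]
  have hDP : ∀ j, D j * D j = D j := by
    intro j
    simp only [hDdef, diagonal_mul_diagonal]
    refine congrArg diagonal ?_
    funext i
    by_cases h : i = j <;> simp [Pi.single_apply, h]
  have hDr : ∀ j, (D j).rank = 1 := by
    intro j
    rw [hDdef, rank_diagonal]
    rw [Fintype.card_congr (Equiv.subtypeEquivRight (q := fun i => i = j)
      (by intro i; by_cases h : i = j <;> simp [Pi.single_apply, h]))]
    exact Fintype.card_subtype_eq j
  have hUdet : IsUnit U.det := Matrix.isUnit_det_of_right_inverse hU2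
  have hUHdet : IsUnit Uᴴ.det := Matrix.isUnit_det_of_right_inverse hU1
  -- the rank one projections Q j
  set Q : Fin n → Matrix (Fin n) (Fin n) ℂ := fun j => U * D j * Uᴴ with hQdef
  have hQH : ∀ j, (Q j).IsHermitian := by
    intro j
    show (Q j)ᴴ = Q j
    simp only [hQdef, conjTranspose_mul, conjTranspose_conjTranspose, hDH]
    rw [Matrix.mul_assoc]
  have hQP : ∀ j, Q j * Q j = Q j := by
    intro j
    simp only [hQdef]
    calc U * D j * Uᴴ * (U * D j * Uᴴ)
        = U * (D j * (Uᴴ * U) * (D j * Uᴴ)) := by simp only [Matrix.mul_assoc]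
      _ = U * D j * Uᴴ := by
          rw [hU1, Matrix.mul_one]
          simp only [← Matrix.mul_assoc]
          rw [Matrix.mul_assoc U, hDP j]
  have hQr : ∀ j, (Q j).rank = 1 := by
    intro j
    simp only [hQdef]
    rw [Matrix.rank_mul_eq_left_of_isUnit_det Uᴴ (U * D j) hUHdet,
      Matrix.rank_mul_eq_right_of_isUnit_det U (D j) hUdet, hDr]
  -- fixed matrices
  have hfix : ∀ j, φ (t • (1 : Matrix (Fin n) (Fin n) ℂ) - (t - μ j) • Q j)
      = t • (1 : Matrix (Fin n) (Fin n) ℂ) - (t - μ j) • Q j := by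
    intro j
    exact hfixtc t (t - μ j) ht0 (by have := htμ j; linarith) (by have := hμ0 j; linarith)
      (Q j) (hQH j) (hQP j) (hQr j)
  -- the squeezing diagonal
  set dC : Fin n → Fin n → ℂ := fun j k => (((if k = j then μ j else t) - μ k : ℝ) : ℂ) with hdCdef
  have hsplit : ∀ j, diagonal (dC j)
      = t • (1 : Matrix (Fin n) (Fin n) ℂ) - (t - μ j) • D j - diagonal (fun k => (μ k : ℂ)) := by
    intro j
    ext i k
    by_cases h : i = k
    · subst h
      by_cases h2 : i = j
      · subst h2
        simp [hdCdef, hDdef, diagonal_apply_eq, Matrix.one_apply_eq, Complex.real_smul]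
      · simp [hdCdef, hDdef, diagonal_apply_eq, Matrix.one_apply_eq, Pi.single_apply, h2,
          Complex.real_smul]
    · simp [hdCdef, hDdef, diagonal_apply_ne _ h, Matrix.one_apply_ne h, Pi.single_apply]
  have expandU : ∀ X Y Z : Matrix (Fin n) (Fin n) ℂ,
      U * (X - Y - Z) * Uᴴ = U * X * Uᴴ - U * Y * Uᴴ - U * Z * Uᴴ := by
    intro X Y Z
    rw [Matrix.mul_sub, Matrix.mul_sub, Matrix.sub_mul, Matrix.sub_mul]
  have hUsmul1 : U * (t • (1 : Matrix (Fin n) (Fin n) ℂ)) * Uᴴ = t • 1 := by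
    rw [Matrix.mul_smul, Matrix.mul_one, Matrix.smul_mul, hU2]
  have key : ∀ j, t • (1 : Matrix (Fin n) (Fin n) ℂ) - (t - μ j) • Q j - A
      = U * diagonal (dC j) * Uᴴ := by
    intro j
    rw [hsplit j, expandU, hUsmul1, Matrix.mul_smul, Matrix.smul_mul, ← hspec]
  have hMA : ∀ j, (t • (1 : Matrix (Fin n) (Fin n) ℂ) - (t - μ j) • Q j - A).PosSemidef := by
    intro j
    rw [key j]
    have hd : (diagonal (dC j)).PosSemidef := by
      refine posSemidef_diagonal_iff.mpr fun k => ?_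
      rw [hdCdef]
      have : (0:ℝ) ≤ (if k = j then μ j else t) - μ k := by
        by_cases h : k = j
        · subst h; simp
        · simp [h]; linarith [htμ k]
      simpa using (Complex.zero_le_real).mpr this
    simpa using hd.mul_mul_conjTranspose_same U
  have hMP : ∀ j, (t • (1 : Matrix (Fin n) (Fin n) ℂ) - (t - μ j) • Q j).PosSemidef := by
    intro j
    have := (hMA j).add hA
    simpa using this
  set B := φ A with hBdef
  have hB : B.PosSemidef := hpsd A hA
  have hord : ∀ j, (t • (1 : Matrix (Fin n) (Fin n) ℂ) - (t - μ j) • Q j - B).PosSemidef := by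
    intro j
    have := horder A (t • (1 : Matrix (Fin n) (Fin n) ℂ) - (t - μ j) • Q j) hA (hMP j) (hMA j)
    rwa [hfix j] at this
  -- conjugate back
  have hQU : ∀ j, Uᴴ * Q j * U = D j := by
    intro j
    simp only [hQdef, ← Matrix.mul_assoc]
    rw [hU1, Matrix.one_mul, Matrix.mul_assoc, hU1, Matrix.mul_one]
  have hAU : Uᴴ * A * U = diagonal (fun k => (μ k : ℂ)) := by
    rw [hspec]
    simp only [← Matrix.mul_assoc]
    rw [hU1, Matrix.one_mul, Matrix.mul_assoc, hU1, Matrix.mul_one]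
  have expandUH : ∀ X Y Z : Matrix (Fin n) (Fin n) ℂ,
      Uᴴ * (X - Y - Z) * U = Uᴴ * X * U - Uᴴ * Y * U - Uᴴ * Z * U := by
    intro X Y Z
    rw [Matrix.mul_sub, Matrix.mul_sub, Matrix.sub_mul, Matrix.sub_mul]
  have hUHsmul1 : Uᴴ * (t • (1 : Matrix (Fin n) (Fin n) ℂ)) * U = t • 1 := by
    rw [Matrix.mul_smul, Matrix.mul_one, Matrix.smul_mul, hU1]
  set C : Matrix (Fin n) (Fin n) ℂ := Uᴴ * B * U with hCdef
  have hN : ∀ j, (t • (1 : Matrix (Fin n) (Fin n) ℂ) - (t - μ j) • D j - C).PosSemidef := by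
    intro j
    have h1 := (hord j).mul_mul_conjTranspose_same Uᴴ
    rw [conjTranspose_conjTranspose] at h1
    rwa [expandUH, hUHsmul1, Matrix.mul_smul, Matrix.smul_mul, hQU j] at h1
  -- diagonal entries of a PSD matrix are nonnegative
  have diag_nonneg : ∀ (M : Matrix (Fin n) (Fin n) ℂ), M.PosSemidef → ∀ i, 0 ≤ M i i := by
    intro M hM i
    exact hM.diag_nonneg
  have hNdiag : ∀ j, (t • (1 : Matrix (Fin n) (Fin n) ℂ) - (t - μ j) • D j - C) j j
      = (μ j : ℂ) - C j j := by
    intro j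
    simp [hDdef, Matrix.sub_apply, Matrix.smul_apply, Matrix.one_apply_eq, diagonal_apply_eq,
      Complex.real_smul]
  have hdiagle : ∀ j, 0 ≤ (μ j : ℂ) - C j j := by
    intro j
    have := diag_nonneg _ (hN j) j
    rwa [hNdiag j] at this
  -- trace argument
  have htrB : B.trace = A.trace := by
    rw [Matrix.trace_eq_neg_charpoly_coeff, Matrix.trace_eq_neg_charpoly_coeff,
      hcharpoly A hA]
  have htrA : A.trace = ∑ k, (μ k : ℂ) := by
    rw [hspec, Matrix.trace_mul_cycle, hU1, Matrix.one_mul,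
      Matrix.trace_diagonal]
  have htrC : C.trace = ∑ k, (μ k : ℂ) := by
    rw [hCdef, Matrix.trace_mul_cycle, hU2, Matrix.one_mul, htrB, htrA]
  have hsum : ∑ j, ((μ j : ℂ) - C j j) = 0 := by
    rw [Finset.sum_sub_distrib]
    have : ∑ j, C j j = C.trace := rfl
    rw [this, htrC, sub_self]
  have hCjj : ∀ j, C j j = (μ j : ℂ) := by
    intro j
    have h := (Finset.sum_eq_zero_iff_of_nonneg (fun i _ => hdiagle i)).mp hsum j
      (Finset.mem_univ j)
    have := sub_eq_zero.mp h
    exact this.symm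
  -- columns of C
  have hcol : ∀ j i, C i j = diagonal (fun k => (μ k : ℂ)) i j := by
    intro j i
    have hz : star (Pi.single j (1:ℂ)) ⬝ᵥ
        ((t • (1 : Matrix (Fin n) (Fin n) ℂ) - (t - μ j) • D j - C) *ᵥ Pi.single j 1) = 0 := by
      rw [hsingle_star j]
      simp only [Matrix.mulVec_single_one, single_dotProduct, mul_one, one_mul]
      exact (hNdiag j).trans (by rw [hCjj j, sub_self])
    have h0 := ((hN j).dotProduct_mulVec_zero_iff _).mp hz
    have h1 := congrFun h0 i
    simp only [Matrix.mulVec_single_one, mul_one, Pi.zero_apply] at h1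
    by_cases h : i = j
    · subst h
      rw [diagonal_apply_eq]
      exact hCjj i
    · rw [diagonal_apply_ne _ h]
      have h2 : (t • (1 : Matrix (Fin n) (Fin n) ℂ) - (t - μ j) • D j - C) i j = 0 := h1
      simpa [hDdef, Matrix.sub_apply, Matrix.smul_apply, Matrix.one_apply_ne h,
        diagonal_apply_ne _ h, sub_eq_zero] using h2.symm
  have hCeq : C = diagonal (fun k => (μ k : ℂ)) := by
    ext i j
    exact hcol j i
  -- recover B = A
  have recov : ∀ X : Matrix (Fin n) (Fin n) ℂ, U * (Uᴴ * X * U) * Uᴴ = X := by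
    intro X
    simp only [← Matrix.mul_assoc]
    rw [hU2, Matrix.one_mul, Matrix.mul_assoc, hU2, Matrix.mul_one]
  calc φ A = U * (Uᴴ * B * U) * Uᴴ := (recov B).symm
    _ = U * diagonal (fun k => (μ k : ℂ)) * Uᴴ := by rw [← hCdef, hCeq]
    _ = A := hspec.symm
end
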